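/- arXiv:1711.09016 — 4 statements merged into one kernel-verified Lean document; each statement's English description precedes it below -/
import Mathlib

section
/- For all integers n ≥ 0 and k ≥ 0, the cardinality of RD_{n+2,k} equals (k+1)·Ã(n,k). -/
open Finset

/-- The number of descents of a permutation of `{1, …, m+1}`. -/
def des {m : ℕ} (π : Equiv.Perm (Fin (m + 1))) : ℕ :=
  (Finset.univ.filter fun i : Fin m => π i.succ < π i.castSucc).card

/-- The set `𝒬_{m+1}` of permutations of `{1, …, m+1}` whose largest entry appears
as the first descent (the identity permutation is included). -/
def Qset (m : ℕ) : Finset (Equiv.Perm (Fin (m + 1))) :=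
  Finset.univ.filter fun π =>
    ∀ i : Fin m, i.succ ≤ π⁻¹ (Fin.last m) → π i.castSucc < π i.succ

/-- `Ã(n,k)`: the number of permutations in `𝒬_{n+1}` with exactly `k` descents. -/
def Atil (n k : ℕ) : ℕ := ((Qset n).filter fun π => des π = k).card

/-- Condition (3) in the definition of `RD`: with `a = π⁻¹(1)` (here the smallest
entry is `0 : Fin (m+1)` and positions are `0`-indexed), either `a` is the first
position, or `a` is an interior position and `π(a-1) > π(a+1)`. -/
def rdCond {m : ℕ} (π : Equiv.Perm (Fin (m + 1))) : Prop :=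
  π⁻¹ 0 = 0 ∨ ∃ j : ℕ, ∃ h : j + 2 ≤ m,
    (π⁻¹ 0 : ℕ) = j + 1 ∧ π ⟨j + 2, by omega⟩ < π ⟨j, by omega⟩

open scoped Classical in
/-- `RD_{m+1,k}`: permutations `π` of `{1, …, m+1}` with `π ∈ 𝒬_{m+1}`, `des π = k`,
and, with `a = π⁻¹(1)`, either `a = 1` or `π(a-1) > π(a+1)`. -/
noncomputable def RD (m k : ℕ) : Finset (Equiv.Perm (Fin (m + 1))) :=
  (Qset m).filter fun π => des π = k ∧ rdCond π

namespace CardRDAux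

variable {n : ℕ}

/-- Insert the value `0` at position `a`, shifting all values of `σ` up by one. -/
def ins (a : Fin (n + 2)) (σ : Equiv.Perm (Fin (n + 1))) : Equiv.Perm (Fin (n + 2)) :=
  (finSuccEquiv' a).trans ((Equiv.optionCongr σ).trans (finSuccEquiv' 0).symm)

lemma ins_apply_self (a : Fin (n + 2)) (σ : Equiv.Perm (Fin (n + 1))) : ins a σ a = 0 := by
  simp [ins, finSuccEquiv'_at, finSuccEquiv'_symm_none]

lemma ins_apply_succAbove (a : Fin (n + 2)) (σ : Equiv.Perm (Fin (n + 1))) (i : Fin (n + 1)) :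
    ins a σ (a.succAbove i) = (σ i).succ := by
  simp [ins, finSuccEquiv'_succAbove]

lemma ins_apply_lt (a : Fin (n + 2)) (σ : Equiv.Perm (Fin (n + 1))) {p : ℕ}
    (hp : p < (a : ℕ)) (h2 : p < n + 1) (h3 : p < n + 2) :
    ins a σ ⟨p, h3⟩ = (σ ⟨p, h2⟩).succ := by
  have h : (⟨p, h3⟩ : Fin (n + 2)) = a.succAbove ⟨p, h2⟩ := by
    rw [Fin.succAbove_of_castSucc_lt]
    · rfl
    · simpa [Fin.lt_def] using hp
  rw [h, ins_apply_succAbove]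

lemma ins_apply_gt (a : Fin (n + 2)) (σ : Equiv.Perm (Fin (n + 1))) {p : ℕ}
    (hp : (a : ℕ) < p) (h2 : p - 1 < n + 1) (h3 : p < n + 2) :
    ins a σ ⟨p, h3⟩ = (σ ⟨p - 1, h2⟩).succ := by
  have h : (⟨p, h3⟩ : Fin (n + 2)) = a.succAbove ⟨p - 1, h2⟩ := by
    rw [Fin.succAbove_of_le_castSucc]
    · ext; simp; omega
    · simp [Fin.le_def]; omega
  rw [h, ins_apply_succAbove]

lemma ins_inv_zero (a : Fin (n + 2)) (σ : Equiv.Perm (Fin (n + 1))) : (ins a σ)⁻¹ 0 = a := by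
  apply (ins a σ).injective
  rw [Equiv.Perm.inv_def, Equiv.apply_symm_apply, ins_apply_self]

lemma ins_inv_last (a : Fin (n + 2)) (σ : Equiv.Perm (Fin (n + 1))) :
    (ins a σ)⁻¹ (Fin.last (n + 1)) = a.succAbove (σ⁻¹ (Fin.last n)) := by
  apply (ins a σ).injective
  rw [Equiv.Perm.inv_def, Equiv.apply_symm_apply, ins_apply_succAbove, Equiv.Perm.inv_def, Equiv.apply_symm_apply, Fin.succ_last]

attribute [irreducible] ins

/-- Allowed insertion positions: the front, or right inside a descent of `σ`. -/
def allowedP (a : Fin (n + 2)) (σ : Equiv.Perm (Fin (n + 1))) : Prop :=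
  a = 0 ∨ ∃ j : Fin n, (a : ℕ) = (j : ℕ) + 1 ∧ σ j.succ < σ j.castSucc

/-- The position-shift map on descent positions. -/
def gmap (a : Fin (n + 2)) (j : Fin n) : Fin (n + 1) :=
  if (j : ℕ) < (a : ℕ) then j.castSucc else j.succ

lemma ins_descent_iff {a : Fin (n + 2)} {σ : Equiv.Perm (Fin (n + 1))}
    (ha : allowedP a σ) (i : Fin (n + 1)) :
    ins a σ i.succ < ins a σ i.castSucc ↔
      ∃ j : Fin n, (σ j.succ < σ j.castSucc) ∧ gmap a j = i := by
  obtain ⟨v, hv⟩ : ∃ v, (i : ℕ) = v := ⟨_, rfl⟩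
  have hvn : v < n + 1 := hv ▸ i.isLt
  have hb1 : v < n + 2 := by omega
  have hb2 : v + 1 < n + 2 := by omega
  have hcs : (i.castSucc : Fin (n + 2)) = ⟨v, hb1⟩ := by ext; simpa using hv
  have hsc : (i.succ : Fin (n + 2)) = ⟨v + 1, hb2⟩ := by ext; simpa using hv
  have hgm : ∀ j : Fin n, gmap a j = i ↔
      (((j : ℕ) < (a : ℕ) ∧ (j : ℕ) = v) ∨ (¬ (j : ℕ) < (a : ℕ) ∧ (j : ℕ) + 1 = v)) := by
    intro j
    rw [gmap]
    split_ifs with hja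
    · simp [Fin.ext_iff, hv, hja]
    · simp [Fin.ext_iff, hv, hja]
  rcases lt_trichotomy (v + 1) (a : ℕ) with hA | hA | hA
  · -- v + 1 < a
    have hv1 : v + 1 < n + 1 := by omega
    rw [hcs, hsc, ins_apply_lt a σ (by omega) hvn hb1,
      ins_apply_lt a σ (by omega) hv1 hb2, Fin.succ_lt_succ_iff]
    constructor
    · intro h
      refine ⟨⟨v, by omega⟩, h, ?_⟩
      rw [hgm]
      left
      exact ⟨by simpa using (by omega : v < (a : ℕ)), rfl⟩
    · rintro ⟨j, hdes, hj⟩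
      rw [hgm] at hj
      rcases hj with ⟨hja, hjv⟩ | ⟨hja, hjv⟩
      · have hj2 : j = ⟨v, by omega⟩ := by ext; exact hjv
        rw [hj2] at hdes; exact hdes
      · omega
  · -- v + 1 = a : automatic descent, and RHS holds by allowedP
    have hrhs : ∃ j : Fin n, (σ j.succ < σ j.castSucc) ∧ gmap a j = i := by
      rcases ha with h0 | ⟨j, hja, hdes⟩
      · exfalso; rw [h0, Fin.val_zero] at hA; omega
      · exact ⟨j, hdes, by rw [hgm]; left; exact ⟨by omega, by omega⟩⟩
    simp only [hrhs, iff_true]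
    have h1 : ins a σ i.succ = 0 := by
      rw [hsc, show (⟨v + 1, hb2⟩ : Fin (n + 2)) = a from by ext; simp [hA], ins_apply_self]
    rw [h1, hcs, ins_apply_lt a σ (by omega) hvn hb1]
    exact Fin.succ_pos _
  · -- v ≥ a
    rcases eq_or_lt_of_le (by omega : (a : ℕ) ≤ v) with hE | hE
    · -- v = a : never a descent, and RHS is false
      have h1 : ins a σ i.castSucc = 0 := by
        rw [hcs, show (⟨v, hb1⟩ : Fin (n + 2)) = a from by ext; simp [hE], ins_apply_self]
      constructor
      · intro h; rw [h1] at h; exact absurd h (Fin.not_lt_zero _)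
      · rintro ⟨j, hdes, hj⟩
        rw [hgm] at hj
        omega
    · -- v > a
      have hv1 : v - 1 < n := by omega
      have hv2 : v - 1 < n + 1 := by omega
      have hv3 : v + 1 - 1 < n + 1 := by omega
      rw [hcs, hsc, ins_apply_gt a σ (by omega) hv2 hb1,
        ins_apply_gt a σ (by omega) hv3 hb2, Fin.succ_lt_succ_iff]
      have e1 : (⟨v + 1 - 1, hv3⟩ : Fin (n + 1)) = (⟨v - 1, hv1⟩ : Fin n).succ := by
        ext; simp; omega
      have e2 : (⟨v - 1, hv2⟩ : Fin (n + 1)) = (⟨v - 1, hv1⟩ : Fin n).castSucc := by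
        ext; simp
      rw [e1, e2]
      constructor
      · intro h
        refine ⟨⟨v - 1, hv1⟩, h, ?_⟩
        rw [hgm]
        right
        constructor <;> simp <;> omega
      · rintro ⟨j, hdes, hj⟩
        rw [hgm] at hj
        rcases hj with ⟨hja, hjv⟩ | ⟨hja, hjv⟩
        · omega
        · have hj2 : j = ⟨v - 1, hv1⟩ := by ext; simp; omega
          rw [hj2] at hdes; exact hdes

lemma gmap_injective (a : Fin (n + 2)) : Function.Injective (gmap a) := by
  intro x y hxy
  rw [gmap, gmap] at hxy
  split_ifs at hxy with h1 h2 h2 <;> rw [Fin.ext_iff] at hxy ⊢ <;> simp at hxy <;> omega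

lemma des_ins {a : Fin (n + 2)} {σ : Equiv.Perm (Fin (n + 1))} (ha : allowedP a σ) :
    des (ins a σ) = des σ := by
  have hset : (Finset.univ.filter fun i : Fin (n + 1) => ins a σ i.succ < ins a σ i.castSucc)
      = (Finset.univ.filter fun j : Fin n => σ j.succ < σ j.castSucc).image (gmap a) := by
    ext i
    simp only [Finset.mem_filter, Finset.mem_univ, true_and, Finset.mem_image]
    exact ins_descent_iff ha i
  rw [des, des, hset, Finset.card_image_of_injective _ (gmap_injective a)]

lemma qset_ins {a : Fin (n + 2)} {σ : Equiv.Perm (Fin (n + 1))} (ha : allowedP a σ) :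
    (∀ i : Fin (n + 1), i.succ ≤ (ins a σ)⁻¹ (Fin.last (n + 1)) →
        ins a σ i.castSucc < ins a σ i.succ) ↔
    (∀ i : Fin n, i.succ ≤ σ⁻¹ (Fin.last n) → σ i.castSucc < σ i.succ) := by
  obtain ⟨m, hm⟩ : ∃ m, σ⁻¹ (Fin.last n) = m := ⟨_, rfl⟩
  have hM : (ins a σ)⁻¹ (Fin.last (n + 1)) = a.succAbove m := by rw [ins_inv_last, hm]
  rcases ha with h0 | ⟨j0, hja, hdes⟩
  · -- a = 0 : M = m.succ
    subst h0
    have hM' : (ins (0 : Fin (n + 2)) σ)⁻¹ (Fin.last (n + 1)) = m.succ := by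
      rw [hM, Fin.zero_succAbove]
    rw [hM']
    constructor
    · intro H i hi
      rw [hm] at hi
      have := H i.succ (by rwa [Fin.succ_le_succ_iff])
      have hi1 : ((i : ℕ) + 1) < n + 2 := by omega
      have hi2 : ((i : ℕ) + 1 + 1) < n + 2 := by omega
      have hc : ((i.succ : Fin (n + 1)).castSucc : Fin (n + 2)) = ⟨(i : ℕ) + 1, hi1⟩ := rfl
      have hs : ((i.succ : Fin (n + 1)).succ : Fin (n + 2)) = ⟨(i : ℕ) + 1 + 1, hi2⟩ := rfl
      rw [hc, hs, ins_apply_gt 0 σ (by simp only [Fin.val_zero]; omega) (by omega) hi1,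
        ins_apply_gt 0 σ (by simp only [Fin.val_zero]; omega) (by omega) hi2, Fin.succ_lt_succ_iff] at this
      have e1 : (⟨(i : ℕ) + 1 - 1, by omega⟩ : Fin (n + 1)) = i.castSucc := by ext; simp
      have e2 : (⟨(i : ℕ) + 1 + 1 - 1, by omega⟩ : Fin (n + 1)) = i.succ := by
        ext; simp only [Fin.val_succ, Fin.coe_castSucc]; omega
      rwa [e1, e2] at this
    · intro H i hi
      obtain ⟨v, hv⟩ : ∃ v, (i : ℕ) = v := ⟨_, rfl⟩
      have hvn : v < n + 1 := hv ▸ i.isLt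
      have hb1 : v < n + 2 := by omega
      have hb2 : v + 1 < n + 2 := by omega
      have hcs : (i.castSucc : Fin (n + 2)) = ⟨v, hb1⟩ := by ext; simpa using hv
      have hsc : (i.succ : Fin (n + 2)) = ⟨v + 1, hb2⟩ := by ext; simpa using hv
      rcases Nat.eq_zero_or_pos v with hv0 | hv0
      · rw [hcs, hsc]
        subst hv0
        rw [show (⟨0, hb1⟩ : Fin (n + 2)) = 0 from rfl, ins_apply_self,
          ins_apply_gt 0 σ (by simp only [Fin.val_zero]; omega) (by omega) hb2]
        exact Fin.succ_pos _
      · have hvv1 : v - 1 < n := by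
          -- from hi : i.succ ≤ m.succ, v ≤ m ≤ n; and v ≥ 1
          have : (i : ℕ) + 1 ≤ (m : ℕ) + 1 := by simpa using hi
          omega
        rw [hcs, hsc, ins_apply_gt 0 σ (by simp only [Fin.val_zero]; omega) (by omega) hb1,
          ins_apply_gt 0 σ (by simp only [Fin.val_zero]; omega) (by omega) hb2, Fin.succ_lt_succ_iff]
        have := H ⟨v - 1, hvv1⟩ (by
          have h8 : (i : ℕ) + 1 ≤ (m : ℕ) + 1 := by simpa using hi
          rw [Fin.le_def]
          simp only [Fin.val_succ, Fin.coe_castSucc]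
          omega)
        have e1 : ((⟨v - 1, hvv1⟩ : Fin n).castSucc) = ⟨v - 1, by omega⟩ := rfl
        have e2 : ((⟨v - 1, hvv1⟩ : Fin n).succ) = ⟨v + 1 - 1, by omega⟩ := by
          ext; simp only [Fin.val_succ, Fin.coe_castSucc]; omega
        rw [e1, e2] at this
        exact this
  · -- a = j0 + 1 with a descent of σ at j0
    constructor
    · intro H i hi
      -- first: m ≤ j0, i.e. (m:ℕ) < (a:ℕ)
      have hma : (m : ℕ) < (a : ℕ) := by
        by_contra hcon
        push_neg at hcon
        -- then M = m.succ ; apply H at position a - 1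
        have hM' : (ins a σ)⁻¹ (Fin.last (n + 1)) = m.succ := by
          rw [hM, Fin.succAbove_of_le_castSucc]
          simpa [Fin.le_def] using hcon
        have ha1 : (a : ℕ) - 1 < n + 1 := by omega
        have := H ⟨(a : ℕ) - 1, ha1⟩ (by
          rw [hM', Fin.le_def]
          simp only [Fin.val_succ, Fin.coe_castSucc]
          omega)
        have hc : ((⟨(a : ℕ) - 1, ha1⟩ : Fin (n + 1)).succ : Fin (n + 2)) = a := by
          ext; simp; omega
        rw [hc, ins_apply_self] at this
        exact absurd this (Fin.not_lt_zero _)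
      have hM' : (ins a σ)⁻¹ (Fin.last (n + 1)) = Fin.castSucc m := by
        rw [hM, Fin.succAbove_of_castSucc_lt]
        simpa [Fin.lt_def] using hma
      obtain ⟨v, hv⟩ : ∃ v, (i : ℕ) = v := ⟨_, rfl⟩
      have hvm : v + 1 ≤ (m : ℕ) := by
        have h9 := hi
        rw [hm, Fin.le_def] at h9
        simpa [hv] using h9
      have hvn : v < n := by omega
      have hb1 : v < n + 2 := by omega
      have hb2 : v + 1 < n + 2 := by omega
      have hvn1 : v < n + 1 := by omega
      have := H ⟨v, hvn1⟩ (by rw [hM', Fin.le_def]; simp only [Fin.val_succ, Fin.coe_castSucc]; omega)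
      have hc : ((⟨v, hvn1⟩ : Fin (n + 1)).castSucc : Fin (n + 2)) = ⟨v, hb1⟩ := rfl
      have hs : ((⟨v, hvn1⟩ : Fin (n + 1)).succ : Fin (n + 2)) = ⟨v + 1, hb2⟩ := rfl
      rw [hc, hs, ins_apply_lt a σ (by omega) (by omega) hb1,
        ins_apply_lt a σ (by omega) (by omega) hb2, Fin.succ_lt_succ_iff] at this
      have e1 : (⟨v, by omega⟩ : Fin (n + 1)) = i.castSucc := by ext; simp [hv]
      have e2 : (⟨v + 1, by omega⟩ : Fin (n + 1)) = i.succ := by ext; simp [Fin.val_succ, hv]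
      rw [e1, e2] at this
      exact this
    · intro H i hi
      -- first : m ≤ j0
      have hmj : (m : ℕ) ≤ (j0 : ℕ) := by
        by_contra hcon
        push_neg at hcon
        have := H j0 (by rw [hm, Fin.le_def]; simp only [Fin.val_succ, Fin.coe_castSucc]; omega)
        exact absurd hdes this.asymm
      have hma : (m : ℕ) < (a : ℕ) := by omega
      have hM' : (ins a σ)⁻¹ (Fin.last (n + 1)) = Fin.castSucc m := by
        rw [hM, Fin.succAbove_of_castSucc_lt]
        simpa [Fin.lt_def] using hma
      obtain ⟨v, hv⟩ : ∃ v, (i : ℕ) = v := ⟨_, rfl⟩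
      have hvm : v + 1 ≤ (m : ℕ) := by
        have h9 := hi
        rw [hM', Fin.le_def] at h9
        simpa [hv] using h9
      have hvn : v < n + 1 := by omega
      have hb1 : v < n + 2 := by omega
      have hb2 : v + 1 < n + 2 := by omega
      have hcs : (i.castSucc : Fin (n + 2)) = ⟨v, hb1⟩ := by ext; simpa using hv
      have hsc : (i.succ : Fin (n + 2)) = ⟨v + 1, hb2⟩ := by ext; simpa using hv
      rw [hcs, hsc, ins_apply_lt a σ (by omega) (by omega) hb1,
        ins_apply_lt a σ (by omega) (by omega) hb2, Fin.succ_lt_succ_iff]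
      have hvn' : v < n := by omega
      have := H ⟨v, hvn'⟩ (by rw [hm, Fin.le_def]; simp only [Fin.val_succ, Fin.coe_castSucc]; omega)
      have e1 : ((⟨v, hvn'⟩ : Fin n).castSucc) = ⟨v, hvn⟩ := rfl
      have e2 : ((⟨v, hvn'⟩ : Fin n).succ) = ⟨v + 1, by omega⟩ := rfl
      rw [e1, e2] at this
      exact this

lemma ins_right_injective {a : Fin (n + 2)} {σ σ' : Equiv.Perm (Fin (n + 1))}
    (h : ins a σ = ins a σ') : σ = σ' := by
  apply Equiv.ext
  intro i
  have h1 : ins a σ (a.succAbove i) = ins a σ' (a.succAbove i) := by rw [h]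
  rw [ins_apply_succAbove, ins_apply_succAbove] at h1
  exact Fin.succ_injective _ h1

/-- Delete the value `0` from `π`, shifting all other values down by one. -/
def rem (π : Equiv.Perm (Fin (n + 2))) : Equiv.Perm (Fin (n + 1)) :=
  Equiv.removeNone ((finSuccEquiv' (π⁻¹ 0)).symm.trans (π.trans (finSuccEquiv' 0)))

lemma ins_rem (π : Equiv.Perm (Fin (n + 2))) : ins (π⁻¹ 0) (rem π) = π := by
  have ha : π (π⁻¹ 0) = 0 := π.apply_symm_apply 0
  apply Equiv.ext
  intro x
  rcases eq_or_ne x (π⁻¹ 0) with rfl | hx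
  · rw [ins_apply_self, ha]
  · obtain ⟨i, rfl⟩ := Fin.exists_succAbove_eq hx
    rw [ins_apply_succAbove]
    have hy : π ((π⁻¹ 0).succAbove i) ≠ 0 := by
      intro hcon
      exact Fin.succAbove_ne (π⁻¹ 0) i (π.injective (by rw [hcon, ha]))
    have key : ((finSuccEquiv' (π⁻¹ 0)).symm.trans (π.trans (finSuccEquiv' 0))) (some i)
        = some ((π ((π⁻¹ 0).succAbove i)).pred hy) := by
      simp only [Equiv.trans_apply, finSuccEquiv'_symm_some]
      have h5 := finSuccEquiv'_above (i := (0 : Fin (n + 2)))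
        (m := (π ((π⁻¹ 0).succAbove i)).pred hy) (Fin.zero_le _)
      rw [Fin.succ_pred] at h5
      exact h5
    have h6 : rem π i = (π ((π⁻¹ 0).succAbove i)).pred hy := by
      have h2 := Equiv.removeNone_some (e := (finSuccEquiv' (π⁻¹ 0)).symm.trans
        (π.trans (finSuccEquiv' 0))) ⟨_, key⟩
      rw [key] at h2
      exact Option.some_injective _ h2.symm |>.symm
    rw [h6, Fin.succ_pred]


lemma rdCond_ins (a : Fin (n + 2)) (σ : Equiv.Perm (Fin (n + 1))) :
    rdCond (ins a σ) ↔ allowedP a σ := by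
  unfold rdCond allowedP
  rw [ins_inv_zero]
  apply or_congr Iff.rfl
  constructor
  · rintro ⟨j, hj2, hja, hlt⟩
    have hjn : j < n := by omega
    refine ⟨⟨j, hjn⟩, by simpa using hja, ?_⟩
    have hb1 : j < n + 1 := by omega
    have hb1' : j < n + 2 := by omega
    have hb2 : j + 2 < n + 2 := by omega
    have hb2' : j + 2 - 1 < n + 1 := by omega
    rw [ins_apply_gt a σ (by omega) hb2' hb2, ins_apply_lt a σ (by omega) hb1 hb1',
      Fin.succ_lt_succ_iff] at hlt
    have e1 : (⟨j + 2 - 1, hb2'⟩ : Fin (n + 1)) = (⟨j, hjn⟩ : Fin n).succ := by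
      ext; simp only [Fin.val_succ]; omega
    have e2 : (⟨j, hb1⟩ : Fin (n + 1)) = (⟨j, hjn⟩ : Fin n).castSucc := rfl
    rw [e1, e2] at hlt
    exact hlt
  · rintro ⟨j, hja, hdes⟩
    refine ⟨(j : ℕ), by omega, by simpa using hja, ?_⟩
    have hb1 : (j : ℕ) < n + 1 := by omega
    have hb1' : (j : ℕ) < n + 2 := by omega
    have hb2 : (j : ℕ) + 2 < n + 2 := by omega
    have hb2' : (j : ℕ) + 2 - 1 < n + 1 := by omega
    rw [ins_apply_gt a σ (by omega) hb2' hb2, ins_apply_lt a σ (by omega) hb1 hb1',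
      Fin.succ_lt_succ_iff]
    have e1 : (⟨(j : ℕ) + 2 - 1, hb2'⟩ : Fin (n + 1)) = j.succ := by
      ext; simp only [Fin.val_succ]; omega
    have e2 : (⟨(j : ℕ), hb1⟩ : Fin (n + 1)) = j.castSucc := rfl
    rw [e1, e2]
    exact hdes

/-- The finset of allowed insertion positions. -/
def allowedF (σ : Equiv.Perm (Fin (n + 1))) : Finset (Fin (n + 2)) :=
  insert 0 ((Finset.univ.filter fun j : Fin n => σ j.succ < σ j.castSucc).image
    (fun j : Fin n => (⟨(j : ℕ) + 1, by have := j.isLt; omega⟩ : Fin (n + 2))))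

lemma mem_allowedF {a : Fin (n + 2)} {σ : Equiv.Perm (Fin (n + 1))} :
    a ∈ allowedF σ ↔ allowedP a σ := by
  unfold allowedF allowedP
  simp only [Finset.mem_insert, Finset.mem_image, Finset.mem_filter, Finset.mem_univ, true_and]
  apply or_congr Iff.rfl
  constructor
  · rintro ⟨j, hdes, hj⟩
    exact ⟨j, by rw [← hj], hdes⟩
  · rintro ⟨j, hja, hdes⟩
    exact ⟨j, hdes, by ext; simpa using hja.symm⟩

lemma card_allowedF (σ : Equiv.Perm (Fin (n + 1))) : (allowedF σ).card = des σ + 1 := by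
  have hinj : Function.Injective
      (fun j : Fin n => (⟨(j : ℕ) + 1, by have := j.isLt; omega⟩ : Fin (n + 2))) := by
    intro x y h
    ext
    simpa using congrArg Fin.val h
  rw [allowedF, Finset.card_insert_of_notMem (by simp [Fin.ext_iff]),
    Finset.card_image_of_injective _ hinj, des]

lemma mem_Qset {m : ℕ} (π : Equiv.Perm (Fin (m + 1))) :
    π ∈ Qset m ↔ ∀ i : Fin m, i.succ ≤ π⁻¹ (Fin.last m) → π i.castSucc < π i.succ := by
  simp [Qset]

end CardRDAux

open CardRDAux in
theorem card_RD (n k : ℕ) : (RD (n + 1) k).card = (k + 1) * Atil n k := by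
  classical
  set A : Finset (Equiv.Perm (Fin (n + 1))) := (Qset n).filter (fun σ => des σ = k) with hA
  have hbij : ((A.sigma fun σ => allowedF σ)).card = (RD (n + 1) k).card := by
    refine Finset.card_bij' (fun p _ => ins p.2 p.1) (fun π _ => ⟨rem π, π⁻¹ 0⟩) ?_ ?_ ?_ ?_
    · rintro ⟨σ, a⟩ hp
      rw [Finset.mem_sigma] at hp
      obtain ⟨hσA, haF⟩ := hp
      rw [hA, Finset.mem_filter] at hσA
      obtain ⟨hσQ, hσdes⟩ := hσA
      have hall : allowedP a σ := mem_allowedF.mp haF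
      rw [RD, Finset.mem_filter]
      refine ⟨?_, ?_, (rdCond_ins a σ).mpr hall⟩
      · rw [mem_Qset]
        rw [mem_Qset] at hσQ
        exact (qset_ins hall).mpr hσQ
      · rw [des_ins hall]
        exact hσdes
    · intro π hπ
      rw [RD, Finset.mem_filter] at hπ
      obtain ⟨hπQ, hπdes, hπrd⟩ := hπ
      have hall : allowedP (π⁻¹ 0) (rem π) := by
        rw [← rdCond_ins (π⁻¹ 0) (rem π)]
        rwa [ins_rem π]
      rw [Finset.mem_sigma]
      constructor
      · rw [hA, Finset.mem_filter]
        constructor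
        · rw [mem_Qset]
          rw [mem_Qset] at hπQ
          have := (qset_ins hall).mp
          rw [ins_rem π] at this
          exact this hπQ
        · have := des_ins hall
          rw [ins_rem π] at this
          rw [← this]
          exact hπdes
      · exact mem_allowedF.mpr hall
    · rintro ⟨σ, a⟩ hp
      have h0 : (ins a σ)⁻¹ 0 = a := ins_inv_zero a σ
      have h1 : rem (ins a σ) = σ := by
        apply ins_right_injective (a := a)
        have := ins_rem (ins a σ)
        rwa [h0] at this
      exact Sigma.ext h1 (heq_of_eq h0)
    · intro π _
      exact ins_rem π
  have hAcard : A.card = Atil n k := rfl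
  calc (RD (n + 1) k).card
      = ((A.sigma fun σ => allowedF σ)).card := hbij.symm
    _ = ∑ σ ∈ A, (allowedF σ).card := Finset.card_sigma _ _
    _ = ∑ _σ ∈ A, (k + 1) := by
        refine Finset.sum_congr rfl (fun σ hσ => ?_)
        rw [card_allowedF σ]
        rw [hA, Finset.mem_filter] at hσ
        rw [hσ.2]
    _ = A.card * (k + 1) := by rw [Finset.sum_const, smul_eq_mul]
    _ = (k + 1) * Atil n k := by rw [hAcard, Nat.mul_comm]
end

section
/- For all integers n ≥ 1 and k ≥ 1, the cardinality of R̄HD_{n+1,k−1} equals n·Ã(n−1,k−1). -/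
open Finset

/-- `R̄HD_{n+1,k}` (here as `RHDbar n k`): pairs `(π, i)` with `π ∈ 𝒬_{n+1}`,
`des π = k`, and `i ∈ {1, …, π⁻¹(n+1) - 1}`, where `π⁻¹(n+1)` is the (`1`-indexed)
position of the largest entry, so `π⁻¹(n+1) - 1 = (π⁻¹ (Fin.last n) : ℕ)`. -/
def RHDbar (n k : ℕ) : Finset (Equiv.Perm (Fin (n + 1)) × ℕ) :=
  (Qset n ×ˢ Finset.range (n + 2)).filter fun p =>
    des p.1 = k ∧ p.2 ∈ Finset.Icc 1 ((p.1⁻¹ (Fin.last n) : ℕ))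

set_option linter.unreachableTactic false
set_option linter.unnecessarySeqFocus false
set_option linter.unusedTactic false

private lemma succAbove_val {k : ℕ} (p : Fin (k+1)) (i : Fin k) :
    ((p.succAbove i : Fin (k+1)) : ℕ) = if (i:ℕ) < (p:ℕ) then (i:ℕ) else (i:ℕ)+1 := by
  rcases lt_or_ge (Fin.castSucc i) p with h | h
  · rw [Fin.succAbove_of_castSucc_lt _ _ h]
    simp [Fin.lt_def] at h
    simp [h]
  · rw [Fin.succAbove_of_le_castSucc _ _ h]
    simp [Fin.le_def] at h
    rw [Fin.val_succ, if_neg (by omega)]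

private lemma qset_consec {m : ℕ} {π : Equiv.Perm (Fin (m+1))}
    (hπ : ∀ i : Fin m, i.succ ≤ π⁻¹ (Fin.last m) → π i.castSucc < π i.succ)
    {c b : Fin (m+1)} (hcb : (b:ℕ) = (c:ℕ) + 1) (hb : b ≤ π⁻¹ (Fin.last m)) :
    π c < π b := by
  have hc : (c:ℕ) < m := by have := b.isLt; omega
  have h1 : (⟨(c:ℕ), hc⟩ : Fin m).castSucc = c := by ext; simp
  have h2 : (⟨(c:ℕ), hc⟩ : Fin m).succ = b := by ext; simp [hcb]
  have := hπ ⟨(c:ℕ), hc⟩ (by rw [h2]; exact hb)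
  rwa [h1, h2] at this

private lemma qset_mono {m : ℕ} {π : Equiv.Perm (Fin (m+1))}
    (hπ : ∀ i : Fin m, i.succ ≤ π⁻¹ (Fin.last m) → π i.castSucc < π i.succ) :
    ∀ a b : Fin (m+1), a < b → b ≤ π⁻¹ (Fin.last m) → π a < π b := by
  have H : ∀ d (a b : Fin (m+1)), (b:ℕ) = (a:ℕ)+d+1 → b ≤ π⁻¹ (Fin.last m) → π a < π b := by
    intro d
    induction d with
    | zero => intro a b h1 h2; exact qset_consec hπ (by omega) h2
    | succ d ih =>
      intro a b h1 h2
      have hc : (a:ℕ) + d + 1 < m + 1 := by have := b.isLt; omega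
      have h3 : π a < π ⟨(a:ℕ)+d+1, hc⟩ :=
        ih a _ rfl (le_trans (by simp only [Fin.le_def]; omega) h2)
      refine lt_trans h3 (qset_consec hπ ?_ h2)
      show (b:ℕ) = (a:ℕ)+d+1+1
      omega
  intro a b hab hb
  exact H ((b:ℕ)-(a:ℕ)-1) a b (by rw [Fin.lt_def] at hab; omega) hb

private lemma des_eq {m : ℕ} (t₁ s₁ : Fin (m+1)) (π : Equiv.Perm (Fin (m+2)))
    (σ : Equiv.Perm (Fin (m+1)))
    (h1 : ∀ a : Fin (m+1), π (t₁.castSucc.succAbove a) = s₁.castSucc.succAbove (σ a))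
    (h3 : π t₁.castSucc < π t₁.succ)
    (h4 : ∀ b : Fin (m+1), (b:ℕ) + 1 = (t₁:ℕ) → π b.castSucc < π b.succ) :
    des σ = des π := by
  have pair : ∀ a : Fin m, (σ a.succ < σ a.castSucc ↔
      π (t₁.succAbove a).succ < π (t₁.succAbove a).castSucc) := by
    intro a
    rcases lt_trichotomy ((a:ℕ)+1) (t₁:ℕ) with h | h | h
    · have e1 : (t₁.succAbove a).castSucc = t₁.castSucc.succAbove a.castSucc := by
        ext
        simp only [Fin.coe_castSucc, succAbove_val, Fin.val_succ] <;> (try split_ifs) <;> omega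
      have e2 : (t₁.succAbove a).succ = t₁.castSucc.succAbove a.succ := by
        ext
        simp only [Fin.coe_castSucc, succAbove_val, Fin.val_succ] <;> (try split_ifs) <;> omega
      rw [e1, e2, h1, h1, Fin.succAbove_lt_succAbove_iff]
    · have e1 : (t₁.succAbove a).castSucc = t₁.castSucc.succAbove a.castSucc := by
        ext
        simp only [Fin.coe_castSucc, succAbove_val, Fin.val_succ] <;> (try split_ifs) <;> omega
      have e2 : (t₁.succAbove a).succ = t₁.castSucc := by
        ext
        simp only [Fin.coe_castSucc, succAbove_val, Fin.val_succ] <;> (try split_ifs) <;> omega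
      have e3 : t₁.succ = t₁.castSucc.succAbove a.succ := by
        ext
        simp only [Fin.coe_castSucc, succAbove_val, Fin.val_succ] <;> (try split_ifs) <;> omega
      have hlt : π (t₁.succAbove a).castSucc < π t₁.castSucc := by
        rw [← e2]
        exact h4 (t₁.succAbove a) (by simp only [succAbove_val] <;> (try split_ifs) <;> omega)
      constructor
      · intro hσ
        exfalso
        have hs : s₁.castSucc.succAbove (σ a.succ) < s₁.castSucc.succAbove (σ a.castSucc) := by
          rwa [Fin.succAbove_lt_succAbove_iff]
        rw [← h1, ← h1, ← e1, ← e3] at hs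
        exact absurd hs (not_lt.2 (le_of_lt (lt_trans hlt h3)))
      · intro hπ'
        rw [e2] at hπ'
        exact absurd hπ' (not_lt.2 (le_of_lt hlt))
    · have e1 : (t₁.succAbove a).castSucc = t₁.castSucc.succAbove a.castSucc := by
        ext
        simp only [Fin.coe_castSucc, succAbove_val, Fin.val_succ] <;> (try split_ifs) <;> omega
      have e2 : (t₁.succAbove a).succ = t₁.castSucc.succAbove a.succ := by
        ext
        simp only [Fin.coe_castSucc, succAbove_val, Fin.val_succ] <;> (try split_ifs) <;> omega
      rw [e1, e2, h1, h1, Fin.succAbove_lt_succAbove_iff]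
  unfold des
  apply Finset.card_nbij (i := fun a => t₁.succAbove a)
  · intro a ha
    simp only [Finset.mem_coe, Finset.mem_filter, Finset.mem_univ, true_and] at ha ⊢
    exact (pair a).1 ha
  · exact Fin.succAbove_right_injective.injOn
  · intro b hb
    simp only [Finset.coe_filter, Set.mem_setOf_eq, Finset.mem_univ, true_and] at hb
    have hbne : b ≠ t₁ := by
      rintro rfl
      exact absurd hb (not_lt.2 (le_of_lt h3))
    obtain ⟨a, ha⟩ := Fin.exists_succAbove_eq hbne
    refine ⟨a, ?_, ha⟩
    simp only [Finset.mem_coe, Finset.mem_filter, Finset.mem_univ, true_and]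
    rw [← ha] at hb
    exact (pair a).2 hb

/-- removal of the point `t ↦ s` from a permutation -/
private def optPerm {m : ℕ} (t s : Fin (m+2)) (π : Equiv.Perm (Fin (m+2))) :
    Option (Fin (m+1)) ≃ Option (Fin (m+1)) :=
  ((finSuccEquiv' t).symm.trans π).trans (finSuccEquiv' s)

private def delPerm {m : ℕ} (t s : Fin (m+2)) (π : Equiv.Perm (Fin (m+2))) :
    Equiv.Perm (Fin (m+1)) :=
  Equiv.removeNone (optPerm t s π)

private lemma delPerm_spec {m : ℕ} (t s : Fin (m+2)) (π : Equiv.Perm (Fin (m+2)))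
    (h : π t = s) (a : Fin (m+1)) :
    π (t.succAbove a) = s.succAbove (delPerm t s π a) := by
  have hne : π (t.succAbove a) ≠ s := by
    rw [← h]
    exact fun hc => Fin.succAbove_ne t a (π.injective hc)
  obtain ⟨y, hy⟩ := Fin.exists_succAbove_eq hne
  have h1 : optPerm t s π (some a) = some y := by
    simp only [optPerm, Equiv.trans_apply, finSuccEquiv'_symm_some, ← hy,
      finSuccEquiv'_succAbove]
  have h2 := Equiv.removeNone_some (e := optPerm t s π) ⟨y, h1⟩
  rw [h1] at h2
  rw [← hy]
  congr 1
  exact (Option.some_injective _ h2.symm)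

private def insPerm {m : ℕ} (t s : Fin (m+2)) (σ : Equiv.Perm (Fin (m+1))) :
    Equiv.Perm (Fin (m+2)) :=
  ((finSuccEquiv' t).trans (Equiv.optionCongr σ)).trans (finSuccEquiv' s).symm

private lemma insPerm_at {m : ℕ} (t s : Fin (m+2)) (σ : Equiv.Perm (Fin (m+1))) :
    insPerm t s σ t = s := by
  simp [insPerm, finSuccEquiv'_at, finSuccEquiv'_symm_none]

private lemma insPerm_succAbove {m : ℕ} (t s : Fin (m+2)) (σ : Equiv.Perm (Fin (m+1)))
    (a : Fin (m+1)) : insPerm t s σ (t.succAbove a) = s.succAbove (σ a) := by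
  simp [insPerm, finSuccEquiv'_succAbove, finSuccEquiv'_symm_some]

noncomputable section

private def insPos {m : ℕ} (s₁ : Fin (m+1)) (σ : Equiv.Perm (Fin (m+1))) : ℕ :=
  Nat.find (p := fun a => ((σ⁻¹ (Fin.last m) : ℕ) ≤ a ∨
      s₁ ≤ σ ⟨min a m, Nat.lt_succ_of_le (min_le_right a m)⟩))
    ⟨(σ⁻¹ (Fin.last m) : ℕ), Or.inl le_rfl⟩

private lemma insPos_le {m : ℕ} (s₁ : Fin (m+1)) (σ : Equiv.Perm (Fin (m+1))) :
    insPos s₁ σ ≤ (σ⁻¹ (Fin.last m) : ℕ) :=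
  Nat.find_le (Or.inl le_rfl)

private lemma insPos_lt {m : ℕ} (s₁ : Fin (m+1)) (σ : Equiv.Perm (Fin (m+1))) :
    insPos s₁ σ < m + 2 :=
  lt_of_le_of_lt (insPos_le s₁ σ) (by have := (σ⁻¹ (Fin.last m)).isLt; omega)

private lemma insPos_min {m : ℕ} (s₁ : Fin (m+1)) (σ : Equiv.Perm (Fin (m+1)))
    (a : Fin (m+1)) (h : (a:ℕ) < insPos s₁ σ) :
    (a:ℕ) < (σ⁻¹ (Fin.last m) : ℕ) ∧ σ a < s₁ := by
  have h2 := Nat.find_min (p := fun a => ((σ⁻¹ (Fin.last m) : ℕ) ≤ a ∨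
      s₁ ≤ σ ⟨min a m, Nat.lt_succ_of_le (min_le_right a m)⟩))
    ⟨(σ⁻¹ (Fin.last m) : ℕ), Or.inl le_rfl⟩ h
  have h3 : ¬ ((σ⁻¹ (Fin.last m) : ℕ) ≤ (a:ℕ)) := fun hx => h2 (Or.inl hx)
  have h4 : ¬ (s₁ ≤ σ ⟨min (a:ℕ) m, Nat.lt_succ_of_le (min_le_right (a:ℕ) m)⟩) :=
    fun hx => h2 (Or.inr hx)
  rw [not_le] at h3 h4
  have ha : (⟨min (a:ℕ) m, Nat.lt_succ_of_le (min_le_right (a:ℕ) m)⟩ : Fin (m+1)) = a := by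
    ext; simp only; omega
  rw [ha] at h4
  exact ⟨h3, h4⟩


private lemma insPos_spec {m : ℕ} (s₁ : Fin (m+1)) (σ : Equiv.Perm (Fin (m+1))) :
    (σ⁻¹ (Fin.last m) : ℕ) ≤ insPos s₁ σ ∨
      s₁ ≤ σ ⟨min (insPos s₁ σ) m, Nat.lt_succ_of_le (min_le_right _ m)⟩ :=
  Nat.find_spec (p := fun a => ((σ⁻¹ (Fin.last m) : ℕ) ≤ a ∨
      s₁ ≤ σ ⟨min a m, Nat.lt_succ_of_le (min_le_right a m)⟩))
    ⟨(σ⁻¹ (Fin.last m) : ℕ), Or.inl le_rfl⟩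

private def Fmap {m : ℕ} (p : Equiv.Perm (Fin (m+2)) × ℕ) : ℕ × Equiv.Perm (Fin (m+1)) :=
  ((p.1 ⟨(p.2 - 1) % (m+2), Nat.mod_lt _ (Nat.succ_pos _)⟩ : ℕ),
    delPerm ⟨(p.2 - 1) % (m+2), Nat.mod_lt _ (Nat.succ_pos _)⟩
      (p.1 ⟨(p.2 - 1) % (m+2), Nat.mod_lt _ (Nat.succ_pos _)⟩) p.1)

private def Gmap {m : ℕ} (q : ℕ × Equiv.Perm (Fin (m+1))) : Equiv.Perm (Fin (m+2)) × ℕ :=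
  (insPerm ⟨insPos ⟨q.1 % (m+1), Nat.mod_lt _ (Nat.succ_pos _)⟩ q.2,
      insPos_lt ⟨q.1 % (m+1), Nat.mod_lt _ (Nat.succ_pos _)⟩ q.2⟩
    (Fin.castSucc ⟨q.1 % (m+1), Nat.mod_lt _ (Nat.succ_pos _)⟩) q.2,
   insPos ⟨q.1 % (m+1), Nat.mod_lt _ (Nat.succ_pos _)⟩ q.2 + 1)

private lemma mem_RHDbar {m l : ℕ} {π : Equiv.Perm (Fin (m+2))} {i : ℕ} :
    (π, i) ∈ RHDbar (m+1) l ↔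
      (∀ b : Fin (m+1), b.succ ≤ π⁻¹ (Fin.last (m+1)) → π b.castSucc < π b.succ) ∧
        i < m + 3 ∧ des π = l ∧ 1 ≤ i ∧ i ≤ (π⁻¹ (Fin.last (m+1)) : ℕ) := by
  simp only [RHDbar, Qset, Finset.mem_filter, Finset.mem_product, Finset.mem_range,
    Finset.mem_univ, true_and, Finset.mem_Icc] <;> tauto

private lemma mem_target {m l : ℕ} {j : ℕ} {σ : Equiv.Perm (Fin (m+1))} :
    (j, σ) ∈ (Finset.range (m+1)) ×ˢ ((Qset m).filter fun σ => des σ = l) ↔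
      j < m + 1 ∧ (∀ a : Fin m, a.succ ≤ σ⁻¹ (Fin.last m) → σ a.castSucc < σ a.succ) ∧
        des σ = l := by
  simp only [Finset.mem_product, Finset.mem_range, Finset.mem_filter, Qset,
    Finset.mem_univ, true_and] <;> tauto

private lemma forward {m l : ℕ} {π : Equiv.Perm (Fin (m+2))} {i : ℕ}
    (hmem : (π, i) ∈ RHDbar (m+1) l) :
    Fmap (π, i) ∈ (Finset.range (m+1)) ×ˢ ((Qset m).filter fun σ => des σ = l) ∧
      Gmap (Fmap (π, i)) = (π, i) := by
  obtain ⟨hQ, hi3, hdes, hi1, hi2⟩ := mem_RHDbar.1 hmem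
  set P := π⁻¹ (Fin.last (m+1)) with hP
  have hPm : (P:ℕ) ≤ m + 1 := Nat.le_of_lt_succ P.isLt
  have htn : i - 1 < (P:ℕ) := by omega
  have htm2 : i - 1 < m + 2 := by omega
  set t : Fin (m+2) := ⟨i - 1, htm2⟩ with ht
  have htval : (t:ℕ) = i - 1 := rfl
  have hmod : (i - 1) % (m+2) = i - 1 := Nat.mod_eq_of_lt htm2
  have hteq : (⟨(i - 1) % (m + 2), Nat.mod_lt _ (Nat.succ_pos _)⟩ : Fin (m+2)) = t := by
    ext; exact hmod
  set s : Fin (m+2) := π t with hs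
  have hFm : Fmap (π, i) = ((s:ℕ), delPerm t s π) := by
    simp only [Fmap, hteq]
    rfl
  have htP : t ≠ P := by
    intro hc
    rw [← hc] at htn
    omega
  have hs_ne : s ≠ Fin.last (m+1) := by
    intro hc
    apply htP
    have h1 : π⁻¹ s = t := Equiv.symm_apply_apply π t
    rw [← h1, hc]
  have hsm : (s:ℕ) < m + 1 := by
    have h1 : (s:ℕ) < m + 2 := s.isLt
    have h2 : (s:ℕ) ≠ m + 1 := fun hc => hs_ne (Fin.ext hc)
    omega
  set s₁ : Fin (m+1) := ⟨(s:ℕ), hsm⟩ with hs₁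
  have hs₁val : (s₁:ℕ) = (s:ℕ) := rfl
  have hcs : s₁.castSucc = s := Fin.ext rfl
  have htm1 : i - 1 < m + 1 := by omega
  set t₁ : Fin (m+1) := ⟨i - 1, htm1⟩ with ht₁
  have ht₁val : (t₁:ℕ) = i - 1 := rfl
  have hct : t₁.castSucc = t := Fin.ext rfl
  set σ := delPerm t s π with hσ
  have hrel : ∀ a : Fin (m+1), π (t.succAbove a) = s.succAbove (σ a) :=
    delPerm_spec t s π rfl
  have hmono := qset_mono hQ
  have hQv : (P:ℕ) - 1 < m + 1 := by omega
  set Q : Fin (m+1) := ⟨(P:ℕ) - 1, hQv⟩ with hQdef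
  have hQval : (Q:ℕ) = (P:ℕ) - 1 := rfl
  have htQ : t.succAbove Q = P := by
    ext
    rw [succAbove_val]
    simp only [hQval, htval]
    rw [if_neg (by omega)]
    show (P:ℕ) - 1 + 1 = (P:ℕ)
    omega
  have hσQL : s.succAbove (σ Q) = Fin.last (m+1) := by
    rw [← hrel, htQ, hP]
    exact Equiv.apply_symm_apply π _
  have hsL : s.succAbove (Fin.last m) = Fin.last (m+1) := by
    ext
    rw [succAbove_val]
    rw [if_neg (by simp only [Fin.val_last]; omega)]
    simp [Fin.val_last]
  have hσQ : σ Q = Fin.last m := Fin.succAbove_right_injective (hσQL.trans hsL.symm)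
  have hQinv : σ⁻¹ (Fin.last m) = Q := by
    rw [Equiv.Perm.inv_eq_iff_eq]
    exact hσQ.symm
  have hQσ : ∀ a : Fin m, a.succ ≤ σ⁻¹ (Fin.last m) → σ a.castSucc < σ a.succ := by
    intro a ha
    rw [hQinv, Fin.le_def] at ha
    simp only [hQval, Fin.val_succ] at ha
    have h1 : σ a.castSucc < σ a.succ ↔
        π (t.succAbove a.castSucc) < π (t.succAbove a.succ) := by
      rw [hrel, hrel, Fin.succAbove_lt_succAbove_iff]
    rw [h1]
    apply hmono
    · exact (Fin.strictMono_succAbove t) (Fin.castSucc_lt_succ (i := a))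
    · rw [Fin.le_def, succAbove_val]
      simp only [htval, Fin.val_succ]
      split_ifs <;> omega
  have hdes' : des σ = des π := by
    apply des_eq t₁ s₁ π σ
    · intro a; rw [hct, hcs]; exact hrel a
    · apply hmono
      · exact Fin.castSucc_lt_succ (i := t₁)
      · rw [Fin.le_def, Fin.val_succ]
        show i - 1 + 1 ≤ (P:ℕ)
        omega
    · intro b hb
      have hb' : (b:ℕ) + 1 = i - 1 := hb
      apply hmono
      · exact Fin.castSucc_lt_succ (i := b)
      · rw [Fin.le_def, Fin.val_succ]
        show (b:ℕ) + 1 ≤ (P:ℕ)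
        omega
  refine ⟨?_, ?_⟩
  · rw [hFm, mem_target]
    exact ⟨hsm, hQσ, by rw [hdes']; exact hdes⟩
  · rw [hFm]
    have hsmod : (s:ℕ) % (m+1) = (s:ℕ) := Nat.mod_eq_of_lt hsm
    have hs₁' : (⟨(s:ℕ) % (m+1), Nat.mod_lt _ (Nat.succ_pos _)⟩ : Fin (m+1)) = s₁ := by
      ext; exact hsmod
    have hfind : insPos s₁ σ = i - 1 := by
      unfold insPos
      rw [Nat.find_eq_iff]
      constructor
      · rw [hQinv]
        rcases eq_or_lt_of_le (show i - 1 ≤ (Q:ℕ) from by omega) with heq | hlt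
        · exact Or.inl (le_of_eq heq.symm)
        · right
          have hmin : (⟨min (i-1) m, Nat.lt_succ_of_le (min_le_right _ m)⟩ : Fin (m+1)) = t₁ := by
            ext
            show min (i-1) m = i - 1
            omega
          rw [hmin]
          have hst : t.succAbove t₁ = ⟨i - 1 + 1, by omega⟩ := by
            ext
            rw [succAbove_val]
            simp only [ht₁val, htval]
            rw [if_neg (by omega)]
          have hπlt : π t < π (t.succAbove t₁) := by
            rw [hst]
            apply hmono
            · rw [Fin.lt_def]; show i - 1 < i - 1 + 1; omega
            · rw [Fin.le_def]; show i - 1 + 1 ≤ (P:ℕ); omega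
          rw [hrel, ← hs] at hπlt
          have hv := succAbove_val s (σ t₁)
          rw [Fin.lt_def] at hπlt
          rw [Fin.le_def]
          simp only [hv] at hπlt
          show (s₁:ℕ) ≤ (σ t₁ : ℕ)
          split_ifs at hπlt <;> omega
      · intro a ha
        rw [hQinv]
        intro hcon
        have ham : a < m + 1 := by omega
        have hmin : (⟨min a m, Nat.lt_succ_of_le (min_le_right a m)⟩ : Fin (m+1))
            = ⟨a, ham⟩ := by
          ext
          show min a m = a
          omega
        rw [hmin] at hcon
        rcases hcon with hcon | hcon
        · omega
        · have hpa : t.succAbove ⟨a, ham⟩ = ⟨a, by omega⟩ := by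
            ext
            rw [succAbove_val]
            simp only [htval]
            rw [if_pos (by omega)]
          have hπlt : π (t.succAbove ⟨a, ham⟩) < π t := by
            rw [hpa]
            apply hmono
            · rw [Fin.lt_def]; show a < i - 1; omega
            · rw [Fin.le_def]; show i - 1 ≤ (P:ℕ); omega
          rw [hrel, ← hs] at hπlt
          have hv := succAbove_val s (σ ⟨a, ham⟩)
          rw [Fin.lt_def] at hπlt
          rw [Fin.le_def] at hcon
          simp only [hv] at hπlt
          have hcon' : (s₁:ℕ) ≤ (σ ⟨a, ham⟩ : ℕ) := hcon
          split_ifs at hπlt <;> omega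
    have hins : insPerm t s σ = π := by
      apply Equiv.ext
      intro x
      rcases eq_or_ne x t with rfl | hx
      · rw [insPerm_at]
      · obtain ⟨a, ha⟩ := Fin.exists_succAbove_eq hx
        rw [← ha, insPerm_succAbove, ← hrel]
    have hGm : Gmap ((s:ℕ), σ) = (π, i) := by
      simp only [Gmap, hs₁']
      have e1 : (⟨insPos s₁ σ, insPos_lt s₁ σ⟩ : Fin (m+2)) = t := by
        ext
        show insPos s₁ σ = i - 1
        exact hfind
      rw [e1, hcs, hins, Prod.mk.injEq]
      exact ⟨rfl, by omega⟩
    exact hGm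

private lemma backward {m l : ℕ} {j : ℕ} {σ : Equiv.Perm (Fin (m+1))}
    (hmem : (j, σ) ∈ (Finset.range (m+1)) ×ˢ ((Qset m).filter fun σ => des σ = l)) :
    Gmap (j, σ) ∈ RHDbar (m+1) l ∧ Fmap (Gmap (j, σ)) = (j, σ) := by
  obtain ⟨hj, hQσ, hdesσ⟩ := mem_target.1 hmem
  have hjmod : j % (m+1) = j := Nat.mod_eq_of_lt hj
  set s₁ : Fin (m+1) := ⟨j % (m+1), Nat.mod_lt _ (Nat.succ_pos _)⟩ with hs₁def
  have hs₁val : (s₁:ℕ) = j := hjmod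
  set q : Fin (m+1) := σ⁻¹ (Fin.last m) with hqdef
  have hqm : (q:ℕ) ≤ m := Nat.le_of_lt_succ q.isLt
  set tn : ℕ := insPos s₁ σ with htndef
  have htq : tn ≤ (q:ℕ) := insPos_le s₁ σ
  set t : Fin (m+2) := ⟨tn, insPos_lt s₁ σ⟩ with htdef
  have htval : (t:ℕ) = tn := rfl
  set s : Fin (m+2) := s₁.castSucc with hsdef
  have hsval : (s:ℕ) = j := hs₁val
  set π : Equiv.Perm (Fin (m+2)) := insPerm t s σ with hπdef
  have hπt : π t = s := insPerm_at t s σ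
  have hπab : ∀ a : Fin (m+1), π (t.succAbove a) = s.succAbove (σ a) :=
    insPerm_succAbove t s σ
  have hσmono := qset_mono hQσ
  have hσq : σ q = Fin.last m := Equiv.apply_symm_apply σ _
  have thr1 : ∀ a : Fin (m+1), (a:ℕ) < tn → (a:ℕ) < (q:ℕ) ∧ σ a < s₁ := fun a h =>
    insPos_min s₁ σ a h
  have thr2 : ∀ a : Fin (m+1), tn ≤ (a:ℕ) → (a:ℕ) ≤ (q:ℕ) → s₁ ≤ σ a := by
    intro a h1 h2
    rcases eq_or_lt_of_le h2 with heq | hlt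
    · have ha : a = q := Fin.ext heq
      rw [ha, hσq]
      exact Fin.le_last s₁
    · have htnq : tn < (q:ℕ) := lt_of_le_of_lt h1 hlt
      have htnm' : tn < m + 1 := by omega
      rcases insPos_spec s₁ σ with hsp | hsp
      · omega
      · have hmin : (⟨min (insPos s₁ σ) m, Nat.lt_succ_of_le (min_le_right _ m)⟩ :
            Fin (m+1)) = ⟨tn, htnm'⟩ := by
          ext
          show min (insPos s₁ σ) m = tn
          rw [← htndef]
          omega
        rw [hmin] at hsp
        rcases eq_or_lt_of_le h1 with heq2 | hlt2
        · have ha : (⟨tn, htnm'⟩ : Fin (m+1)) = a := Fin.ext heq2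
          rwa [ha] at hsp
        · refine le_trans hsp (le_of_lt ?_)
          apply hσmono
          · rw [Fin.lt_def]; exact hlt2
          · rw [Fin.le_def]; exact h2
  have hqlt : (q:ℕ) + 1 < m + 2 := by omega
  have htq' : t.succAbove q = ⟨(q:ℕ)+1, hqlt⟩ := by
    ext
    rw [succAbove_val]
    simp only [htval]
    rw [if_neg (by omega)]
  have hsL : s.succAbove (Fin.last m) = Fin.last (m+1) := by
    ext
    rw [succAbove_val]
    rw [if_neg (by simp only [Fin.val_last]; omega)]
    simp [Fin.val_last]
  have hπmax : π ⟨(q:ℕ)+1, hqlt⟩ = Fin.last (m+1) := by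
    rw [← htq', hπab, hσq, hsL]
  have hPval : π⁻¹ (Fin.last (m+1)) = ⟨(q:ℕ)+1, hqlt⟩ := by
    rw [Equiv.Perm.inv_eq_iff_eq]
    exact hπmax.symm
  have hQπ : ∀ b : Fin (m+1), b.succ ≤ π⁻¹ (Fin.last (m+1)) → π b.castSucc < π b.succ := by
    intro b hb
    rw [hPval, Fin.le_def] at hb
    simp only [Fin.val_succ] at hb
    have hbq : (b:ℕ) ≤ (q:ℕ) := by exact Nat.le_of_succ_le_succ hb
    rcases lt_trichotomy ((b:ℕ)+1) tn with h | h | h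
    · have hbm : (b:ℕ)+1 < m+1 := by omega
      have e1 : b.castSucc = t.succAbove b := by
        ext
        rw [succAbove_val]
        simp only [htval, Fin.coe_castSucc]
        rw [if_pos (by omega)]
      have e2 : b.succ = t.succAbove ⟨(b:ℕ)+1, hbm⟩ := by
        ext
        rw [succAbove_val]
        simp only [htval, Fin.val_succ]
        rw [if_pos (by omega)]
      rw [e1, e2, hπab, hπab, Fin.succAbove_lt_succAbove_iff]
      apply hσmono
      · rw [Fin.lt_def]; show (b:ℕ) < (b:ℕ)+1; omega
      · rw [Fin.le_def]; show (b:ℕ)+1 ≤ (q:ℕ); omega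
    · have e1 : b.castSucc = t.succAbove b := by
        ext
        rw [succAbove_val]
        simp only [htval, Fin.coe_castSucc]
        rw [if_pos (by omega)]
      have e2 : b.succ = t := by
        ext
        simp only [htval, Fin.val_succ]
        omega
      have hσb : σ b < s₁ := (thr1 b (by omega)).2
      rw [e1, e2, hπab, hπt, Fin.lt_def]
      have hv := succAbove_val s (σ b)
      rw [Fin.lt_def] at hσb
      simp only [hv]
      split_ifs <;> omega
    · rcases eq_or_lt_of_le (show tn ≤ (b:ℕ) from by omega) with heq | hlt
      · have e1 : b.castSucc = t := by
          ext
          simp only [htval, Fin.coe_castSucc]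
          omega
        have e2 : b.succ = t.succAbove b := by
          ext
          rw [succAbove_val]
          simp only [htval, Fin.val_succ]
          rw [if_neg (by omega)]
        have hσb : s₁ ≤ σ b := thr2 b (by omega) hbq
        rw [e1, e2, hπab, hπt, Fin.lt_def]
        have hv := succAbove_val s (σ b)
        rw [Fin.le_def] at hσb
        simp only [hv]
        split_ifs <;> omega
      · have hbm : (b:ℕ) - 1 < m+1 := by omega
        have e1 : b.castSucc = t.succAbove ⟨(b:ℕ)-1, hbm⟩ := by
          ext
          rw [succAbove_val]
          simp only [htval, Fin.coe_castSucc]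
          rw [if_neg (by omega)]
          omega
        have e2 : b.succ = t.succAbove b := by
          ext
          rw [succAbove_val]
          simp only [htval, Fin.val_succ]
          rw [if_neg (by omega)]
        rw [e1, e2, hπab, hπab, Fin.succAbove_lt_succAbove_iff]
        apply hσmono
        · rw [Fin.lt_def]; show (b:ℕ)-1 < (b:ℕ); omega
        · rw [Fin.le_def]; exact hbq
  have htnm : tn < m + 1 := by omega
  have hdesπ : des σ = des π := by
    apply des_eq ⟨tn, htnm⟩ s₁ π σ
    · intro a
      have hc : (⟨tn, htnm⟩ : Fin (m+1)).castSucc = t := by ext; rfl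
      rw [hc]
      exact hπab a
    · apply hQπ
      rw [hPval, Fin.le_def]
      simp only [Fin.val_succ]
      show tn + 1 ≤ (q:ℕ) + 1
      omega
    · intro b hb
      have hb' : (b:ℕ) + 1 = tn := hb
      apply hQπ
      rw [hPval, Fin.le_def]
      simp only [Fin.val_succ]
      show (b:ℕ) + 1 ≤ (q:ℕ) + 1
      omega
  have hGm : Gmap (j, σ) = (π, tn + 1) := rfl
  rw [hGm]
  constructor
  · rw [mem_RHDbar]
    refine ⟨hQπ, by omega, by rw [← hdesπ]; exact hdesσ, by omega, ?_⟩
    rw [hPval]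
    show tn + 1 ≤ (q:ℕ) + 1
    omega
  · have hmodt : (tn + 1 - 1) % (m+2) = tn := Nat.mod_eq_of_lt (by omega)
    have hteq2 : (⟨(tn + 1 - 1) % (m + 2), Nat.mod_lt _ (Nat.succ_pos _)⟩ : Fin (m+2)) = t := by
      ext; exact hmodt
    have hdel : delPerm t s π = σ := by
      apply Equiv.ext
      intro a
      apply Fin.succAbove_right_injective (p := s)
      rw [← delPerm_spec t s π hπt a, hπab]
    simp only [Fmap, hteq2, hπt, hdel]
    rw [Prod.mk.injEq]
    exact ⟨hsval, rfl⟩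

private lemma key (m l : ℕ) : (RHDbar (m+1) l).card = (m+1) * Atil m l := by
  have hcard : (m+1) * Atil m l
      = ((Finset.range (m+1)) ×ˢ ((Qset m).filter fun σ => des σ = l)).card := by
    rw [Finset.card_product, Finset.card_range]
    rfl
  rw [hcard]
  refine Finset.card_nbij' Fmap Gmap ?_ ?_ ?_ ?_
  · rintro ⟨π, i⟩ h; exact (forward h).1
  · rintro ⟨j, σ⟩ h; exact (backward h).1
  · rintro ⟨π, i⟩ h; exact (forward h).2
  · rintro ⟨j, σ⟩ h; exact (backward h).2

theorem card_RHDbar (n k : ℕ) (hn : 1 ≤ n) (hk : 1 ≤ k) :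
    (RHDbar n (k - 1)).card = n * Atil (n - 1) (k - 1) := by
  obtain ⟨m, rfl⟩ : ∃ m, n = m + 1 := ⟨n - 1, by omega⟩
  obtain ⟨l, rfl⟩ : ∃ l, k = l + 1 := ⟨k - 1, by omega⟩
  simpa using key m l
end
end

section
/- For all integers n ≥ 1 and k ≥ 1, the cardinality of R̄FA_{n+1,k} equals n·B̃(n−1,k−1). -/
open Finset

/-- The number of ascents of a permutation of `{1, …, m+1}`. -/
def asc {m : ℕ} (π : Equiv.Perm (Fin (m + 1))) : ℕ :=
  (Finset.univ.filter fun i : Fin m => π i.castSucc < π i.succ).card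

/-- `B̃(n,k)`: the number of permutations in `𝒬_{n+1}` with exactly `k` ascents. -/
def Btil (n k : ℕ) : ℕ := ((Qset n).filter fun π => asc π = k).card

/-- `R̄FA_{n+1,k}`: pairs `(π, i)` with `π ∈ 𝒬_{n+1}`, `asc π = k`,
`i ∈ {1, …, k} ∪ {n+1}`, and `i ≤ π⁻¹(n+1) - 1`, where `π⁻¹(n+1)` is the
(`1`-indexed) position of the largest entry, so `π⁻¹(n+1) - 1 = (π⁻¹ (Fin.last n) : ℕ)`. -/
def RFAbar (n k : ℕ) : Finset (Equiv.Perm (Fin (n + 1)) × ℕ) :=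
  (Qset n ×ˢ (Finset.Icc 1 k ∪ {n + 1})).filter fun p =>
    asc p.1 = k ∧ p.2 ≤ (p.1⁻¹ (Fin.last n) : ℕ)

namespace CRFA
variable {N : ℕ}

def pins (a b : Fin (N + 1)) (σ : Equiv.Perm (Fin N)) : Equiv.Perm (Fin (N + 1)) :=
  (finSuccEquiv' a).trans (σ.optionCongr.trans (finSuccEquiv' b).symm)

def pdel (a b : Fin (N + 1)) (π : Equiv.Perm (Fin (N + 1))) : Equiv.Perm (Fin N) :=
  Equiv.removeNone ((finSuccEquiv' a).symm.trans (π.trans (finSuccEquiv' b)))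

@[simp] lemma pins_pivot (a b : Fin (N+1)) (σ : Equiv.Perm (Fin N)) : pins a b σ a = b := by
  simp [pins, finSuccEquiv'_at, finSuccEquiv'_symm_none]

@[simp] lemma pins_succAbove (a b : Fin (N+1)) (σ : Equiv.Perm (Fin N)) (x : Fin N) :
    pins a b σ (a.succAbove x) = b.succAbove (σ x) := by
  simp [pins, finSuccEquiv'_succAbove, finSuccEquiv'_symm_some]

lemma pdel_apply (a b : Fin (N+1)) (π : Equiv.Perm (Fin (N+1))) (h : π a = b) (x : Fin N) :
    b.succAbove (pdel a b π x) = π (a.succAbove x) := by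
  have hne : π (a.succAbove x) ≠ b := by
    rw [← h]
    exact fun hc => Fin.succAbove_ne a x (π.injective hc)
  obtain ⟨z, hz⟩ := Fin.exists_succAbove_eq hne
  have hE : ((finSuccEquiv' a).symm.trans (π.trans (finSuccEquiv' b))) (some x) = some z := by
    simp [finSuccEquiv'_symm_some, ← hz, finSuccEquiv'_succAbove]
  have h2 := Equiv.removeNone_some _ ⟨z, hE⟩
  rw [hE] at h2
  rw [show pdel a b π x = z from Option.some_injective _ h2, hz]

lemma pins_pdel (a b : Fin (N+1)) (π : Equiv.Perm (Fin (N+1))) (h : π a = b) :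
    pins a b (pdel a b π) = π := by
  ext u
  rcases eq_or_ne u a with rfl | hu
  · rw [pins_pivot, h]
  · obtain ⟨z, hz⟩ := Fin.exists_succAbove_eq hu
    rw [← hz, pins_succAbove, pdel_apply a b π h]

lemma pdel_pins (a b : Fin (N+1)) (σ : Equiv.Perm (Fin N)) : pdel a b (pins a b σ) = σ := by
  ext x
  have := pdel_apply a b _ (pins_pivot a b σ) x
  rw [pins_succAbove] at this
  exact congrArg Fin.val (Fin.succAbove_right_injective this)

lemma mem_Qset {M : ℕ} {π : Equiv.Perm (Fin (M+1))} :
    π ∈ Qset M ↔ ∀ i : Fin M, i.succ ≤ π⁻¹ (Fin.last M) → π i.castSucc < π i.succ := by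
  simp [Qset]

lemma Qset_mono {M : ℕ} {π : Equiv.Perm (Fin (M+1))} (hπ : π ∈ Qset M) :
    ∀ v : Fin (M+1), v ≤ π⁻¹ (Fin.last M) → ∀ u, u < v → π u < π v := by
  rw [mem_Qset] at hπ
  intro v
  induction v using Fin.induction with
  | zero => intro _ u hu; exact absurd hu (by simp [Fin.lt_def])
  | succ w ih =>
    intro hv u hu
    have h1 : π w.castSucc < π w.succ := hπ w hv
    have hu' : u ≤ w.castSucc := by
      rw [Fin.le_def]; rw [Fin.lt_def] at hu; simp at hu ⊢; omega
    rcases eq_or_lt_of_le hu' with rfl | h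
    · exact h1
    · exact (ih ((Fin.castSucc_lt_succ : w.castSucc < w.succ).le.trans hv) u h).trans h1

lemma card_filter_val_lt {M : ℕ} (c : ℕ) (hc : c ≤ M) :
    (univ.filter fun x : Fin M => (x : ℕ) < c).card = c := by
  induction c with
  | zero => simp
  | succ d ih =>
    have hd : d < M := hc
    have : (univ.filter fun x : Fin M => (x : ℕ) < d + 1)
        = insert ⟨d, hd⟩ (univ.filter fun x : Fin M => (x : ℕ) < d) := by
      ext x
      simp only [mem_filter, mem_univ, true_and, mem_insert, Fin.ext_iff]
      omega
    rw [this, card_insert_of_notMem (by simp), ih (le_of_lt hd)]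

lemma pos_le_asc {M : ℕ} {σ : Equiv.Perm (Fin (M+1))} (hσ : σ ∈ Qset M) :
    ((σ⁻¹ (Fin.last M) : Fin (M+1)) : ℕ) ≤ asc σ := by
  set q := σ⁻¹ (Fin.last M) with hq
  have hsub : (univ.filter fun x : Fin M => (x : ℕ) < (q : ℕ))
      ⊆ (univ.filter fun x : Fin M => σ x.castSucc < σ x.succ) := by
    intro x hx
    simp only [mem_filter, mem_univ, true_and] at hx ⊢
    exact (mem_Qset.1 hσ) x (by rw [Fin.le_def]; simpa [hq] using hx)
  have := Finset.card_le_card hsub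
  rwa [card_filter_val_lt (q : ℕ) (by omega)] at this

lemma cs_succAbove_last {m : ℕ} (b : Fin (m+1)) :
    (b.castSucc).succAbove (Fin.last m) = Fin.last (m+1) := by
  rw [Fin.succAbove_of_le_castSucc _ _ (by simpa using Fin.le_last b), Fin.succ_last]

lemma val_lt_iff {m : ℕ} (b y : Fin (m+1)) :
    (b.castSucc).succAbove y < b.castSucc ↔ y < b := by
  rw [Fin.succAbove_lt_iff_castSucc_lt, Fin.castSucc_lt_castSucc_iff]

lemma val_gt_iff {m : ℕ} (b y : Fin (m+1)) :
    b.castSucc < (b.castSucc).succAbove y ↔ b ≤ y := by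
  rw [Fin.lt_succAbove_iff_le_castSucc, Fin.castSucc_le_castSucc_iff]

lemma inv_last {m : ℕ} (σ : Equiv.Perm (Fin (m+1))) (a b : Fin (m+1))
    (ha : a ≤ σ⁻¹ (Fin.last m)) :
    (pins a.castSucc b.castSucc σ)⁻¹ (Fin.last (m+1)) = (σ⁻¹ (Fin.last m)).succ := by
  rw [Equiv.Perm.inv_eq_iff_eq]
  rw [show (σ⁻¹ (Fin.last m)).succ = (a.castSucc).succAbove (σ⁻¹ (Fin.last m)) from
    (Fin.succAbove_of_le_castSucc _ _ (by simpa using ha)).symm]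
  rw [pins_succAbove, show σ (σ⁻¹ (Fin.last m)) = Fin.last m from σ.apply_symm_apply _, cs_succAbove_last]

lemma ascent_iff {m : ℕ} {σ : Equiv.Perm (Fin (m+1))} {a b : Fin (m+1)}
    (ha : a ≤ σ⁻¹ (Fin.last m))
    (Hlt : ∀ x : Fin (m+1), x < a → σ x < b)
    (Hge : b ≤ σ a) (t : Fin (m+1)) :
    ((pins a.castSucc b.castSucc σ) t.castSucc < (pins a.castSucc b.castSucc σ) t.succ)
      ↔ (t = a ∨ ∃ x : Fin m, a.succAbove x = t ∧ σ x.castSucc < σ x.succ) := by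
  set π := pins a.castSucc b.castSucc σ with hπdef
  rcases lt_trichotomy t a with hlt | rfl | hgt
  · -- t < a
    have htlast : t ≠ Fin.last m := Fin.ne_last_of_lt hlt
    set x := t.castPred htlast with hxdef
    have hxc : x.castSucc = t := Fin.castSucc_castPred t htlast
    have h1 : π t.castSucc = b.castSucc.succAbove (σ t) := by
      rw [show t.castSucc = (a.castSucc).succAbove t from
        (Fin.succAbove_of_castSucc_lt _ _ (Fin.castSucc_lt_castSucc_iff.mpr hlt)).symm,
        hπdef, pins_succAbove]
    have hat : a.succAbove x = t := by
      rw [Fin.succAbove_of_castSucc_lt _ _ (hxc ▸ hlt), hxc]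
    have hxsle : x.succ ≤ a := Fin.castSucc_lt_iff_succ_le.mp (hxc ▸ hlt)
    have huniq : (∃ x' : Fin m, a.succAbove x' = t ∧ σ x'.castSucc < σ x'.succ)
        ↔ σ x.castSucc < σ x.succ := by
      constructor
      · rintro ⟨x', hx', hasc⟩
        have : x' = x := Fin.succAbove_right_injective (hx'.trans hat.symm)
        rwa [this] at hasc
      · intro hasc; exact ⟨x, hat, hasc⟩
    rcases eq_or_lt_of_le hxsle with heq | hlt2
    · have h2 : π t.succ = b.castSucc := by
        rw [show t.succ = (a.castSucc) from by
          rw [← heq, ← hxc, Fin.succ_castSucc], hπdef, pins_pivot]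
      apply iff_of_true
      · rw [h1, h2, val_lt_iff]; exact Hlt t hlt
      · refine Or.inr ⟨x, hat, ?_⟩
        rw [heq, hxc]
        exact lt_of_lt_of_le (Hlt t hlt) (heq ▸ Hge)
    · have h2 : π t.succ = b.castSucc.succAbove (σ x.succ) := by
        rw [show t.succ = (a.castSucc).succAbove x.succ from by
          rw [Fin.succAbove_of_castSucc_lt _ _ (Fin.castSucc_lt_castSucc_iff.mpr hlt2),
            ← hxc, Fin.succ_castSucc], hπdef, pins_succAbove]
      rw [h1, h2, Fin.succAbove_lt_succAbove_iff, huniq, ← hxc]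
      constructor
      · exact Or.inr
      · rintro (rfl | h)
        · exact absurd (hxc ▸ hlt) (lt_irrefl _)
        · exact h
  · -- t = a
    apply iff_of_true
    · have h2 : π t.succ = b.castSucc.succAbove (σ t) := by
        rw [show t.succ = (t.castSucc).succAbove t from
          (Fin.succAbove_of_le_castSucc _ _ le_rfl).symm, hπdef, pins_succAbove]
      rw [show π t.castSucc = b.castSucc from pins_pivot _ _ _, h2, val_gt_iff]
      exact Hge
    · exact Or.inl rfl
  · -- a < t
    have ht0 : t ≠ 0 := Fin.pos_iff_ne_zero.mp (lt_of_le_of_lt (Fin.zero_le a) hgt)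
    set x := t.pred ht0 with hxdef
    have hxs : x.succ = t := Fin.succ_pred t ht0
    have hax : a ≤ x.castSucc := Fin.le_castSucc_iff.mpr (hxs ▸ hgt)
    have hat : a.succAbove x = t := by
      rw [Fin.succAbove_of_le_castSucc _ _ hax, hxs]
    have h1 : π t.castSucc = b.castSucc.succAbove (σ x.castSucc) := by
      rw [show t.castSucc = (a.castSucc).succAbove x.castSucc from by
        rw [Fin.succAbove_of_le_castSucc _ _ (Fin.castSucc_le_castSucc_iff.mpr hax),
          Fin.succ_castSucc, hxs], hπdef, pins_succAbove]
    have h2 : π t.succ = b.castSucc.succAbove (σ t) := by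
      rw [show t.succ = (a.castSucc).succAbove t from
        (Fin.succAbove_of_le_castSucc _ _ (Fin.castSucc_le_castSucc_iff.mpr hgt.le)).symm,
        hπdef, pins_succAbove]
    rw [h1, h2, Fin.succAbove_lt_succAbove_iff]
    constructor
    · intro h; exact Or.inr ⟨x, hat, by rwa [hxs]⟩
    · rintro (heq | ⟨x', hx', hasc⟩)
      · exact absurd (heq ▸ hgt) (lt_irrefl _)
      · have hxx : x' = x := Fin.succAbove_right_injective (hx'.trans hat.symm)
        rw [hxx] at hasc
        rwa [hxs] at hasc

section Main
variable {m : ℕ} {σ : Equiv.Perm (Fin (m+1))} {a b : Fin (m+1)}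

lemma asc_pins (ha : a ≤ σ⁻¹ (Fin.last m))
    (Hlt : ∀ x : Fin (m+1), x < a → σ x < b) (Hge : b ≤ σ a) :
    asc (pins a.castSucc b.castSucc σ) = asc σ + 1 := by
  have hset : (univ.filter fun t : Fin (m+1) =>
        (pins a.castSucc b.castSucc σ) t.castSucc < (pins a.castSucc b.castSucc σ) t.succ)
      = insert a ((univ.filter fun x : Fin m => σ x.castSucc < σ x.succ).image a.succAbove) := by
    ext t
    simp only [mem_filter, mem_univ, true_and, mem_insert, mem_image]
    rw [ascent_iff ha Hlt Hge t]
    constructor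
    · rintro (rfl | ⟨x, h1, h2⟩)
      · exact Or.inl rfl
      · exact Or.inr ⟨x, h2, h1⟩
    · rintro (rfl | ⟨x, h1, h2⟩)
      · exact Or.inl rfl
      · exact Or.inr ⟨x, h2, h1⟩
  rw [asc, hset, card_insert_of_notMem (fun hmem => by
      obtain ⟨x, _, hx⟩ := mem_image.1 hmem
      exact Fin.succAbove_ne a x hx),
    card_image_of_injective _ Fin.succAbove_right_injective]
  rfl

lemma pins_mem_Qset (hσ : σ ∈ Qset m) (ha : a ≤ σ⁻¹ (Fin.last m))
    (Hlt : ∀ x : Fin (m+1), x < a → σ x < b) (Hge : b ≤ σ a) :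
    pins a.castSucc b.castSucc σ ∈ Qset (m+1) := by
  rw [mem_Qset]
  intro t ht
  rw [inv_last σ a b ha] at ht
  have htq : (t : ℕ) ≤ (σ⁻¹ (Fin.last m) : ℕ) := by
    rw [Fin.le_def] at ht; simpa using ht
  rw [ascent_iff ha Hlt Hge t]
  rcases eq_or_ne t a with rfl | hta
  · exact Or.inl rfl
  · obtain ⟨x, hx⟩ := Fin.exists_succAbove_eq hta
    refine Or.inr ⟨x, hx, mem_Qset.1 hσ x ?_⟩
    have hval := congrArg Fin.val hx
    rw [Fin.le_def]
    rcases le_or_gt a x.castSucc with hle | hlt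
    · rw [Fin.succAbove_of_le_castSucc _ _ hle] at hval
      simp only [Fin.val_succ] at hval ⊢
      omega
    · rw [Fin.succAbove_of_castSucc_lt _ _ hlt] at hval
      rw [Fin.lt_def] at hlt
      rw [Fin.le_def] at ha
      simp only [Fin.coe_castSucc] at hval hlt
      simp only [Fin.val_succ]
      omega

lemma Qset_of_pins (ha : a ≤ σ⁻¹ (Fin.last m))
    (Hlt : ∀ x : Fin (m+1), x < a → σ x < b) (Hge : b ≤ σ a)
    (hπ : pins a.castSucc b.castSucc σ ∈ Qset (m+1)) : σ ∈ Qset m := by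
  rw [mem_Qset]
  intro x hx
  have hx' : ((a.succAbove x).succ : Fin (m+2)) ≤ (σ⁻¹ (Fin.last m)).succ := by
    rw [Fin.le_def]
    rw [Fin.le_def] at hx ha
    simp only [Fin.val_succ]
    rcases le_or_gt a x.castSucc with hle | hlt
    · rw [Fin.succAbove_of_le_castSucc _ _ hle]
      simp only [Fin.val_succ]
      simp only [Fin.val_succ] at hx
      omega
    · rw [Fin.succAbove_of_castSucc_lt _ _ hlt]
      rw [Fin.lt_def] at hlt
      simp only [Fin.coe_castSucc] at hlt ⊢
      simp only [Fin.val_succ] at hx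
      omega
  have hasc := mem_Qset.1 hπ (a.succAbove x) (by rw [inv_last σ a b ha]; exact hx')
  rw [ascent_iff ha Hlt Hge] at hasc
  rcases hasc with heq | ⟨x', h1, h2⟩
  · exact absurd heq (Fin.succAbove_ne a x)
  · rwa [Fin.succAbove_right_injective h1] at h2

/-- insertion index -/
def aW (σ : Equiv.Perm (Fin (m+1))) (b : Fin (m+1)) : ℕ :=
  (univ.filter fun x : Fin (m+1) => x ≤ σ⁻¹ (Fin.last m) ∧ σ x < b).card

lemma aW_down (hσ : σ ∈ Qset m) {x y : Fin (m+1)}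
    (hx : x ≤ σ⁻¹ (Fin.last m) ∧ σ x < b) (hyx : y ≤ x) :
    y ≤ σ⁻¹ (Fin.last m) ∧ σ y < b := by
  refine ⟨hyx.trans hx.1, ?_⟩
  rcases eq_or_lt_of_le hyx with rfl | h
  · exact hx.2
  · exact (Qset_mono hσ x hx.1 y h).trans hx.2

lemma aW_le (hσ : σ ∈ Qset m) (b : Fin (m+1)) : aW σ b ≤ (σ⁻¹ (Fin.last m) : ℕ) := by
  have : (univ.filter fun x : Fin (m+1) => x ≤ σ⁻¹ (Fin.last m) ∧ σ x < b)
      ⊆ Finset.Iio (σ⁻¹ (Fin.last m)) := by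
    intro x hx
    simp only [mem_filter, mem_univ, true_and] at hx
    rw [Finset.mem_Iio]
    rcases eq_or_lt_of_le hx.1 with rfl | h
    · exact absurd (hx.2.trans_le (Fin.le_last b)) (by simp [Equiv.Perm.inv_def])
    · exact h
  have := Finset.card_le_card this
  rwa [Fin.card_Iio] at this

lemma aW_mem (hσ : σ ∈ Qset m) {x : Fin (m+1)} (hx : (x : ℕ) < aW σ b) :
    x ≤ σ⁻¹ (Fin.last m) ∧ σ x < b := by
  by_contra hc
  have hsub : (univ.filter fun x : Fin (m+1) => x ≤ σ⁻¹ (Fin.last m) ∧ σ x < b)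
      ⊆ Finset.Iio x := by
    intro y hy
    simp only [mem_filter, mem_univ, true_and] at hy
    rw [Finset.mem_Iio]
    by_contra hyc
    exact hc (aW_down hσ hy (le_of_not_gt hyc))
  have := Finset.card_le_card hsub
  rw [Fin.card_Iio] at this
  exact absurd (lt_of_lt_of_le hx this) (lt_irrefl _)

lemma aW_ge (hσ : σ ∈ Qset m) {x : Fin (m+1)} (h1 : aW σ b ≤ (x : ℕ))
    (h2 : x ≤ σ⁻¹ (Fin.last m)) : b ≤ σ x := by
  by_contra hc
  push_neg at hc
  have hIic : Finset.Iic x ⊆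
      (univ.filter fun x : Fin (m+1) => x ≤ σ⁻¹ (Fin.last m) ∧ σ x < b) := by
    intro y hy
    rw [Finset.mem_Iic] at hy
    simp only [mem_filter, mem_univ, true_and]
    exact aW_down hσ ⟨h2, hc⟩ hy
  have := Finset.card_le_card hIic
  rw [Fin.card_Iic] at this
  have : (x : ℕ) + 1 ≤ aW σ b := this
  omega

lemma aW_eq (σ : Equiv.Perm (Fin (m+1))) (b : Fin (m+1)) (c : ℕ)
    (hc : c ≤ (σ⁻¹ (Fin.last m) : ℕ))
    (h1 : ∀ x : Fin (m+1), (x : ℕ) < c → σ x < b)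
    (h2 : ∀ x : Fin (m+1), c ≤ (x : ℕ) → x ≤ σ⁻¹ (Fin.last m) → b ≤ σ x) :
    aW σ b = c := by
  have hset : (univ.filter fun x : Fin (m+1) => x ≤ σ⁻¹ (Fin.last m) ∧ σ x < b)
      = univ.filter fun x : Fin (m+1) => (x : ℕ) < c := by
    ext x
    simp only [mem_filter, mem_univ, true_and]
    constructor
    · rintro ⟨hx1, hx2⟩
      by_contra hxc
      exact absurd hx2 (not_lt_of_ge (h2 x (le_of_not_gt hxc) hx1))
    · intro hx
      refine ⟨?_, h1 x hx⟩
      rw [Fin.le_def]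
      omega
  rw [aW, hset, card_filter_val_lt c (by omega)]

end Main
end CRFA
-- appended part
namespace CRFA
section Main2
variable {m : ℕ}

lemma forward {m k : ℕ} (π : Equiv.Perm (Fin (m+2))) (i : ℕ)
    (h1 : π ∈ Qset (m+1)) (h2 : asc π = k) (h3 : 1 ≤ i)
    (h4 : i ≤ ((π⁻¹ (Fin.last (m+1)) : Fin (m+2)) : ℕ)) :
    ∃ (a b : Fin (m+1)) (σ : Equiv.Perm (Fin (m+1))),
      (a : ℕ) = i - 1 ∧ π a.castSucc = b.castSucc ∧
      π = pins a.castSucc b.castSucc σ ∧ pdel a.castSucc b.castSucc π = σ ∧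
      σ ∈ Qset m ∧ asc σ = k - 1 ∧ aW σ b = i - 1 := by
  have hpm : (π⁻¹ (Fin.last (m+1)) : ℕ) ≤ m + 1 := Fin.is_le _
  set a : Fin (m+1) := ⟨i - 1, by omega⟩ with hadef
  have hav : (a : ℕ) = i - 1 := rfl
  have halt : ((a.castSucc : Fin (m+2)) : ℕ) < (π⁻¹ (Fin.last (m+1)) : ℕ) := by
    simp only [Fin.coe_castSucc, hav]; omega
  have hblast : π a.castSucc ≠ Fin.last (m+1) := by
    intro h
    have heq : π⁻¹ (Fin.last (m+1)) = a.castSucc := by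
      rw [Equiv.Perm.inv_eq_iff_eq]; exact h.symm
    rw [heq] at halt; exact lt_irrefl _ halt
  set b : Fin (m+1) := (π a.castSucc).castPred hblast with hbdef
  have hb : π a.castSucc = b.castSucc := (Fin.castSucc_castPred _ _).symm
  set σ := pdel a.castSucc b.castSucc π with hσdef
  have hπσ : π = pins a.castSucc b.castSucc σ := (pins_pdel _ _ _ hb).symm
  have hq' : σ (σ⁻¹ (Fin.last m)) = Fin.last m := σ.apply_symm_apply _
  have hpq : π⁻¹ (Fin.last (m+1)) = (a.castSucc).succAbove (σ⁻¹ (Fin.last m)) := by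
    rw [Equiv.Perm.inv_eq_iff_eq, hπσ, pins_succAbove, hq', cs_succAbove_last]
  have haq : a ≤ σ⁻¹ (Fin.last m) := by
    rw [Fin.le_def]
    by_contra hc
    push_neg at hc
    have hcast := Fin.succAbove_of_castSucc_lt (a.castSucc) (σ⁻¹ (Fin.last m))
        (by rw [Fin.lt_def]; simpa using hc)
    rw [hcast] at hpq
    have hval := congrArg Fin.val hpq
    simp only [Fin.coe_castSucc] at hval
    omega
  have hpval : (π⁻¹ (Fin.last (m+1)) : ℕ) = (σ⁻¹ (Fin.last m) : ℕ) + 1 := by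
    rw [hpq, Fin.succAbove_of_le_castSucc _ _ (by simpa using haq)]
    simp
  have Hlt : ∀ x : Fin (m+1), x < a → σ x < b := by
    intro x hx
    have hpos : (a.castSucc).succAbove x = x.castSucc :=
      Fin.succAbove_of_castSucc_lt _ _ (by simpa using hx)
    have hmono := Qset_mono h1 a.castSucc (by rw [Fin.le_def]; omega)
        x.castSucc (by simpa using hx)
    rw [hb, ← hpos, hπσ, pins_succAbove] at hmono
    exact (val_lt_iff b (σ x)).mp hmono
  have Hge' : ∀ x : Fin (m+1), (a : ℕ) ≤ (x : ℕ) → x ≤ σ⁻¹ (Fin.last m) → b ≤ σ x := by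
    intro x hax hxq
    have hpos : (a.castSucc).succAbove x = x.succ :=
      Fin.succAbove_of_le_castSucc _ _ (by rw [Fin.le_def]; simpa using hax)
    have hxq' : (x : ℕ) ≤ (σ⁻¹ (Fin.last m) : ℕ) := hxq
    have hmono := Qset_mono h1 x.succ
        (by rw [Fin.le_def]; simp only [Fin.val_succ]; omega)
        a.castSucc (by rw [Fin.lt_def]; simp only [Fin.coe_castSucc, Fin.val_succ]; omega)
    rw [hb, ← hpos, hπσ, pins_succAbove] at hmono
    exact (val_gt_iff b (σ x)).mp hmono
  have Hge : b ≤ σ a := Hge' a le_rfl haq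
  have hσQ : σ ∈ Qset m := Qset_of_pins haq Hlt Hge (hπσ ▸ h1)
  have hascσ : asc σ = k - 1 := by
    have hh := asc_pins haq Hlt Hge
    rw [← hπσ, h2] at hh
    omega
  have haw : aW σ b = i - 1 := by
    refine aW_eq σ b (i - 1) (by omega)
      (fun x hx => Hlt x (by rw [Fin.lt_def, hav]; exact hx))
      (fun x hx1 hx2 => Hge' x (by rw [hav]; exact hx1) hx2)
  exact ⟨a, b, σ, hav, hb, hπσ, hσdef.symm, hσQ, hascσ, haw⟩

lemma backward {m k : ℕ} (hk : 1 ≤ k) (σ : Equiv.Perm (Fin (m+1))) (b : Fin (m+1))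
    (hσ : σ ∈ Qset m) (hasc : asc σ = k - 1) :
    ∃ a : Fin (m+1), (a : ℕ) = aW σ b ∧
      pins a.castSucc b.castSucc σ ∈ Qset (m+1) ∧
      asc (pins a.castSucc b.castSucc σ) = k ∧
      aW σ b + 1 ≤ k ∧
      ((pins a.castSucc b.castSucc σ)⁻¹ (Fin.last (m+1)) : ℕ)
        = (σ⁻¹ (Fin.last m) : ℕ) + 1 ∧
      aW σ b ≤ (σ⁻¹ (Fin.last m) : ℕ) := by
  have hle := aW_le hσ b
  have hqm : (σ⁻¹ (Fin.last m) : ℕ) ≤ m := Fin.is_le _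
  set a : Fin (m+1) := ⟨aW σ b, by omega⟩ with hadef
  have hav : (a : ℕ) = aW σ b := rfl
  have haq : a ≤ σ⁻¹ (Fin.last m) := by rw [Fin.le_def]; exact hle
  have Hlt : ∀ x : Fin (m+1), x < a → σ x < b :=
    fun x hx => (aW_mem hσ (by rw [Fin.lt_def] at hx; exact hx)).2
  have Hge : b ≤ σ a := aW_ge hσ (le_of_eq hav.symm) haq
  have hmem := pins_mem_Qset hσ haq Hlt Hge
  have hasc2 : asc (pins a.castSucc b.castSucc σ) = k := by
    rw [asc_pins haq Hlt Hge, hasc]; omega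
  have hinv : ((pins a.castSucc b.castSucc σ)⁻¹ (Fin.last (m+1)) : ℕ)
      = (σ⁻¹ (Fin.last m) : ℕ) + 1 := by
    rw [inv_last σ a b haq]; simp
  have hk2 : aW σ b + 1 ≤ k := by
    have := pos_le_asc hσ; omega
  exact ⟨a, hav, hmem, hasc2, hk2, hinv, hle⟩

def clip (c m : ℕ) : Fin (m + 1) := ⟨min c m, Nat.lt_succ_of_le (min_le_right c m)⟩

lemma clip_eq {c m : ℕ} {b : Fin (m+1)} (h : (b : ℕ) = c) : clip c m = b := by
  have := b.isLt
  apply Fin.ext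
  simp only [clip]
  omega

def Fmap (m : ℕ) (P : Equiv.Perm (Fin (m+2)) × ℕ) : ℕ × Equiv.Perm (Fin (m+1)) :=
  ((P.1 (clip (P.2 - 1) (m+1)) : ℕ) + 1,
    pdel (clip (P.2 - 1) (m+1)) (P.1 (clip (P.2 - 1) (m+1))) P.1)

def Gmap (m : ℕ) (Q : ℕ × Equiv.Perm (Fin (m+1))) : Equiv.Perm (Fin (m+2)) × ℕ :=
  (pins (clip (aW Q.2 (clip (Q.1 - 1) m)) m).castSucc (clip (Q.1 - 1) m).castSucc Q.2,
    aW Q.2 (clip (Q.1 - 1) m) + 1)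

lemma Fmap_eq {m : ℕ} (π : Equiv.Perm (Fin (m+2))) (i : ℕ) {a b : Fin (m+1)}
    {σ : Equiv.Perm (Fin (m+1))}
    (hav : (a : ℕ) = i - 1) (hb : π a.castSucc = b.castSucc)
    (hσ : pdel a.castSucc b.castSucc π = σ) :
    Fmap m (π, i) = ((b : ℕ) + 1, σ) := by
  have hac : clip (i - 1) (m+1) = a.castSucc := clip_eq (by simp [hav])
  unfold Fmap
  simp only [hac, hb, hσ, Fin.coe_castSucc]

lemma Gmap_eq {m : ℕ} (j : ℕ) (σ : Equiv.Perm (Fin (m+1))) {a b : Fin (m+1)}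
    (hbv : (b : ℕ) = j - 1) (hav : (a : ℕ) = aW σ b) :
    Gmap m (j, σ) = (pins a.castSucc b.castSucc σ, aW σ b + 1) := by
  have hbc : clip (j - 1) m = b := clip_eq hbv
  have hac : clip (aW σ b) m = a := clip_eq hav
  unfold Gmap
  simp only [hbc, hac]

end Main2
end CRFA

theorem card_RFAbar (n k : ℕ) (hn : 1 ≤ n) (hk : 1 ≤ k) :
    (RFAbar n k).card = n * Btil (n - 1) (k - 1) := by
  obtain ⟨m, rfl⟩ : ∃ m, n = m + 1 := ⟨n - 1, by omega⟩
  simp only [Nat.add_sub_cancel]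
  have hT : (m + 1) * Btil m (k - 1)
      = ((Finset.Icc 1 (m+1)) ×ˢ ((Qset m).filter fun σ => asc σ = k - 1)).card := by
    rw [card_product, Nat.card_Icc, Btil]
    congr 1
  rw [hT]
  apply Finset.card_nbij' (CRFA.Fmap m) (CRFA.Gmap m)
  · -- hi
    rintro ⟨π, i⟩ hP
    simp only [Finset.mem_coe, RFAbar, mem_filter, mem_product, mem_union, Finset.mem_Icc,
      mem_singleton] at hP
    obtain ⟨⟨hπQ, hiU⟩, hascπ, hile⟩ := hP
    have h3 : 1 ≤ i := by rcases hiU with ⟨h, _⟩ | h; exact h; omega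
    obtain ⟨a, b, σ, hav, hb, hπσ, hdel, hσQ, hascσ, haw⟩ :=
      CRFA.forward π i hπQ hascπ h3 hile
    rw [CRFA.Fmap_eq π i hav hb hdel]
    simp only [Finset.mem_coe, mem_product, Finset.mem_Icc, mem_filter]
    have := b.isLt
    exact ⟨⟨by omega, by omega⟩, hσQ, hascσ⟩
  · -- hj
    rintro ⟨j, σ⟩ hQ
    simp only [Finset.mem_coe, mem_product, Finset.mem_Icc, mem_filter] at hQ
    obtain ⟨⟨hj1, hj2⟩, hσQ, hascσ⟩ := hQ
    set b : Fin (m+1) := ⟨j - 1, by omega⟩ with hbdef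
    obtain ⟨a, hav, hmem, hasc2, hk2, hinv, hle⟩ := CRFA.backward hk σ b hσQ hascσ
    rw [CRFA.Gmap_eq j σ rfl hav]
    simp only [Finset.mem_coe, RFAbar, mem_filter, mem_product, mem_union, Finset.mem_Icc,
      mem_singleton]
    exact ⟨⟨hmem, Or.inl ⟨by omega, hk2⟩⟩, hasc2, by rw [hinv]; omega⟩
  · -- left_inv
    rintro ⟨π, i⟩ hP
    simp only [Finset.mem_coe, RFAbar, mem_filter, mem_product, mem_union, Finset.mem_Icc,
      mem_singleton] at hP
    obtain ⟨⟨hπQ, hiU⟩, hascπ, hile⟩ := hP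
    have h3 : 1 ≤ i := by rcases hiU with ⟨h, _⟩ | h; exact h; omega
    obtain ⟨a, b, σ, hav, hb, hπσ, hdel, hσQ, hascσ, haw⟩ :=
      CRFA.forward π i hπQ hascπ h3 hile
    rw [CRFA.Fmap_eq π i hav hb hdel,
      CRFA.Gmap_eq ((b : ℕ) + 1) σ (a := a) (b := b) (by omega) (by omega), ← hπσ]
    simp only [Prod.mk.injEq]
    exact ⟨trivial, by omega⟩
  · -- right_inv
    rintro ⟨j, σ⟩ hQ
    simp only [Finset.mem_coe, mem_product, Finset.mem_Icc, mem_filter] at hQ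
    obtain ⟨⟨hj1, hj2⟩, hσQ, hascσ⟩ := hQ
    set b : Fin (m+1) := ⟨j - 1, by omega⟩ with hbdef
    have hbv : (b : ℕ) = j - 1 := rfl
    obtain ⟨a, hav, hmem, hasc2, hk2, hinv, hle⟩ := CRFA.backward hk σ b hσQ hascσ
    rw [CRFA.Gmap_eq j σ rfl hav,
      CRFA.Fmap_eq _ _ (a := a) (b := b) (by omega) (CRFA.pins_pivot _ _ _)
        (CRFA.pdel_pins _ _ _)]
    simp only [Prod.mk.injEq]
    exact ⟨by omega, trivial⟩
end

section
/- Let a_n = Σ_{π ∈ 𝒬_{n+1}} 2^{des(π)}. Then for every integer n ≥ 1, a_n = Σ_{j=1}^{n} C(n,j)·a_{n−j} + 2^n, where C(n,j) is the binomial coefficient. -/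
open Finset

def rnk {n : ℕ} (B : Finset (Fin n)) (v : ℕ) : ℕ := (B.filter (fun b : Fin n => (b : ℕ) < v)).card

lemma card_filter_val_lt {m j : ℕ} (hj : j ≤ m) :
    (univ.filter fun i : Fin m => (i : ℕ) < j).card = j := by
  have h : (univ.filter fun i : Fin m => (i : ℕ) < j) =
      (univ : Finset (Fin j)).image (Fin.castLE hj) := by
    ext k
    simp only [mem_filter, mem_univ, true_and, mem_image]
    constructor
    · intro hk; exact ⟨⟨(k : ℕ), hk⟩, by ext; simp⟩
    · rintro ⟨i, -, rfl⟩; simpa using i.isLt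
  rw [h, card_image_of_injective _ (Fin.castLE_injective hj), card_univ, Fintype.card_fin]

lemma rnk_orderEmbOfFin {n k : ℕ} (B : Finset (Fin n)) (h : B.card = k) (i : Fin k) :
    rnk B (B.orderEmbOfFin h i : ℕ) = (i : ℕ) := by
  have himg : B.filter (fun b : Fin n => (b : ℕ) < (B.orderEmbOfFin h i : ℕ)) =
      (univ.filter fun a : Fin k => (a : ℕ) < (i : ℕ)).image (B.orderEmbOfFin h) := by
    ext b
    simp only [mem_filter, mem_univ, true_and, mem_image]
    constructor
    · rintro ⟨hbB, hlt⟩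
      have hb : b ∈ Set.range (B.orderEmbOfFin h) := by
        rw [Finset.range_orderEmbOfFin]; exact hbB
      obtain ⟨a, rfl⟩ := hb
      refine ⟨a, ?_, rfl⟩
      have h2 := (B.orderEmbOfFin h).lt_iff_lt (a := a) (b := i)
      exact h2.mp hlt
    · rintro ⟨a, ha, rfl⟩
      refine ⟨Finset.orderEmbOfFin_mem B h a, ?_⟩
      have h2 := (B.orderEmbOfFin h).lt_iff_lt (a := a) (b := i)
      exact h2.mpr ha
  rw [rnk, himg, Finset.card_image_of_injective _ (B.orderEmbOfFin h).injective,
    card_filter_val_lt i.isLt.le]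

lemma exists_rnk {n k : ℕ} (B : Finset (Fin n)) (h : B.card = k) {v : Fin n} (hv : v ∈ B) :
    ∃ i : Fin k, B.orderEmbOfFin h i = v ∧ (i : ℕ) = rnk B (v : ℕ) := by
  have hb : v ∈ Set.range (B.orderEmbOfFin h) := by
    rw [Finset.range_orderEmbOfFin]; exact hv
  obtain ⟨i, rfl⟩ := hb
  exact ⟨i, rfl, (rnk_orderEmbOfFin B h i).symm⟩

lemma nat_chain_lt (f : ℕ → ℕ) (p : ℕ) (h : ∀ k, k + 1 ≤ p → f k < f (k + 1)) :
    ∀ a b, a < b → b ≤ p → f a < f b := by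
  intro a b
  induction b with
  | zero => omega
  | succ b ih =>
    intro hab hbp
    rcases Nat.lt_succ_iff_lt_or_eq.mp hab with h' | h'
    · exact (ih h' (by omega)).trans (h b hbp)
    · subst h'; exact h a hbp

lemma nat_chain_gt (f : ℕ → ℕ) (p : ℕ) (h : ∀ k, k + 1 ≤ p → f (k + 1) < f k) :
    ∀ a b, a < b → b ≤ p → f b < f a := by
  intro a b
  induction b with
  | zero => omega
  | succ b ih =>
    intro hab hbp
    rcases Nat.lt_succ_iff_lt_or_eq.mp hab with h' | h'
    · exact (h b hbp).trans (ih h' (by omega))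
    · subst h'; exact h a hbp

def desSet {m : ℕ} (f : Fin m → ℕ) : Finset (Fin m) :=
  univ.filter fun i => ∃ j : Fin m, (j : ℕ) = (i : ℕ) + 1 ∧ f j < f i

def dcount {m : ℕ} (f : Fin m → ℕ) : ℕ := (desSet f).card

def wrd {m : ℕ} (f : Fin m → Fin m) : Fin m → ℕ := fun i => (f i : ℕ)

def Wset (m : ℕ) : Finset (Fin m → Fin m) := univ.filter Function.Bijective

def Dn (m : ℕ) : ℕ := ∑ f ∈ Wset m, 2 ^ dcount (wrd f)

def Pset (m : ℕ) : Finset ((_ : Fin m → Fin m) × Finset (Fin m)) :=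
  (Wset m).sigma fun f => (desSet (wrd f)).powerset

lemma Dn_eq_card (m : ℕ) : Dn m = (Pset m).card := by
  rw [Pset, card_sigma]
  exact Finset.sum_congr rfl fun f _ => by rw [card_powerset, dcount]

lemma mem_Pset {m : ℕ} {x : (_ : Fin m → Fin m) × Finset (Fin m)} :
    x ∈ Pset m ↔ Function.Bijective x.1 ∧ x.2 ⊆ desSet (wrd x.1) := by
  cases x with
  | mk f S => simp [Pset, Wset, Finset.mem_sigma, Finset.mem_powerset]

lemma des_eq_dcount {m : ℕ} (π : Equiv.Perm (Fin (m + 1))) :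
    des π = dcount (fun i => (π i : ℕ)) := by
  unfold des dcount desSet
  apply Finset.card_nbij (i := fun i => i.castSucc)
  · intro a ha
    simp only [mem_filter, mem_univ, true_and] at ha ⊢
    exact mem_filter.mpr ⟨mem_univ _, a.succ, by simp, by simpa using ha⟩
  · intro a _ b _ hab
    simpa [Fin.castSucc_inj] using hab
  · intro k hk
    simp only [coe_filter, mem_univ, true_and, Set.mem_setOf_eq] at hk
    obtain ⟨j, hj1, hj2⟩ := hk
    have hkm : (k : ℕ) < m := by omega
    refine ⟨⟨k, hkm⟩, ?_, by ext; simp⟩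
    simp only [mem_coe, mem_filter, mem_univ, true_and]
    have h1 : (⟨(k : ℕ), hkm⟩ : Fin m).succ = j := by ext; simp [hj1]
    rw [h1]
    have h2 : (⟨(k : ℕ), hkm⟩ : Fin m).castSucc = k := by ext; simp
    rw [h2]
    exact_mod_cast hj2


lemma downward_closed_mem {n : ℕ} {B : Finset (Fin n)}
    (hdc : ∀ i ∈ B, ∀ k, k ≤ i → k ∈ B) (i : Fin n) :
    i ∈ B ↔ (i : ℕ) < B.card := by
  constructor
  · intro hi
    have h1 : Finset.Iic i ⊆ B := fun k hk => hdc i hi k (mem_Iic.mp hk)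
    have := card_le_card h1
    rw [Fin.card_Iic] at this
    omega
  · intro hi
    by_contra hni
    have h1 : B ⊆ Finset.Iio i := by
      intro b hb
      rw [mem_Iio]
      by_contra hbi
      exact hni (hdc b hb i (le_of_not_gt hbi))
    have := card_le_card h1
    rw [Fin.card_Iio] at this
    omega

lemma mem_desSet {m : ℕ} {w : Fin m → ℕ} {i : Fin m} :
    i ∈ desSet w ↔ ∃ j : Fin m, (j : ℕ) = (i : ℕ) + 1 ∧ w j < w i := by
  simp [desSet]

def bsize {m : ℕ} (S : Finset (Fin m)) : ℕ :=
  (univ.filter fun i : Fin m => ∀ k, k < i → k ∈ S).card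

def tpos {n : ℕ} (j : ℕ) (i : Fin (n - j)) : Fin n :=
  ⟨j + (i : ℕ), by have := i.isLt; omega⟩

def FwdA (n j : ℕ) (f : Fin n → Fin n) : Finset (Fin n) :=
  (univ.filter fun i : Fin n => (i : ℕ) < j).image f

def FwdG (n j : ℕ) (f : Fin n → Fin n) : Fin (n - j) → Fin (n - j) :=
  fun i => ⟨rnk (FwdA n j f)ᶜ (f (tpos j i) : ℕ) % (n - j),
    Nat.mod_lt _ (by have := i.isLt; omega)⟩

def FwdS (n j : ℕ) (S : Finset (Fin n)) : Finset (Fin (n - j)) :=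
  univ.filter fun i => ∃ k : Fin n, (k : ℕ) = j + (i : ℕ) ∧ k ∈ S

def BwdF {n j : ℕ} (A : Finset (Fin n)) (hA : A.card = j) (hj1 : 1 ≤ j)
    (g : Fin (n - j) → Fin (n - j)) : Fin n → Fin n := fun i =>
  if h : (i : ℕ) < j then A.orderEmbOfFin hA ⟨j - 1 - (i : ℕ), by omega⟩
  else (Aᶜ).orderEmbOfFin (by rw [card_compl, hA]; simp)
    (g ⟨(i : ℕ) - j, by have := i.isLt; omega⟩)

def BwdS (n j : ℕ) (T : Finset (Fin (n - j))) : Finset (Fin n) :=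
  univ.filter fun i => ((i : ℕ) + 1 < j) ∨
    (j ≤ (i : ℕ) ∧ ∃ i' : Fin (n - j), (i' : ℕ) = (i : ℕ) - j ∧ i' ∈ T)

section FwdFacts

variable {n j : ℕ} (hj1 : 1 ≤ j) (hjn : j ≤ n) {f : Fin n → Fin n} {S : Finset (Fin n)}

lemma block_mem (hbs : bsize S = j) (i : Fin n) :
    (∀ k, k < i → k ∈ S) ↔ (i : ℕ) < j := by
  classical
  have hdc : ∀ a ∈ (univ.filter fun i : Fin n => ∀ k, k < i → k ∈ S),
      ∀ k, k ≤ a → k ∈ (univ.filter fun i : Fin n => ∀ k, k < i → k ∈ S) := by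
    intro a ha k hk
    simp only [mem_filter, mem_univ, true_and] at ha ⊢
    intro k' hk'
    exact ha k' (lt_of_lt_of_le hk' hk)
  have h2 := downward_closed_mem hdc i
  have hbs' : (univ.filter fun i : Fin n => ∀ k, k < i → k ∈ S).card = j := hbs
  rw [hbs'] at h2
  simpa using h2

lemma S_lower (hbs : bsize S = j) (k : Fin n) (hk : (k : ℕ) + 1 < j) : k ∈ S := by
  have hjn' : j ≤ n := by
    rw [← hbs]; exact (card_filter_le _ _).trans (by simp)
  have hkn : (k : ℕ) + 1 < n := by have := k.isLt; omega
  have h1 := (block_mem hbs ⟨(k : ℕ) + 1, hkn⟩).mpr (by simpa using hk)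
  exact h1 k (by simp only [Fin.lt_def]; simp)

lemma S_boundary (hS : S ⊆ desSet (wrd f)) (hbs : bsize S = j) (hjn : j ≤ n)
    (k : Fin n) (hk : (k : ℕ) = j - 1) : k ∉ S := by
  intro hkS
  by_cases hjlt : j < n
  · have h2 : ¬ ((⟨j, hjlt⟩ : Fin n) : ℕ) < j := by simp
    rw [← block_mem hbs ⟨j, hjlt⟩] at h2
    push_neg at h2
    obtain ⟨k', hk'1, hk'2⟩ := h2
    have hk'lt : (k' : ℕ) < j := by simpa [Fin.lt_def] using hk'1
    by_cases h3 : (k' : ℕ) + 1 < j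
    · exact hk'2 (S_lower hbs k' h3)
    · have : k' = k := by ext; omega
      exact hk'2 (this ▸ hkS)
  · -- j = n, k = n - 1 : k ∈ S ⊆ desSet has successor, contradiction
    have hjn' : j = n := by omega
    obtain ⟨j', hj'1, _⟩ := mem_desSet.mp (hS hkS)
    have := j'.isLt
    omega

/-- `f` is strictly decreasing on the first block. -/
lemma f_dec (hS : S ⊆ desSet (wrd f)) (hbs : bsize S = j)
    (a b : Fin n) (hab : a < b) (hb : (b : ℕ) < j) : f b < f a := by
  have hjn' : j ≤ n := by
    rw [← hbs]; exact (card_filter_le _ _).trans (by simp)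
  set F : ℕ → ℕ := fun k => if h : k < n then wrd f ⟨k, h⟩ else 0 with hF
  have hcons : ∀ k, k + 1 ≤ j - 1 → F (k + 1) < F k := by
    intro k hk
    have hkn : k + 1 < n := by omega
    have hkS : (⟨k, by omega⟩ : Fin n) ∈ S := S_lower hbs _ (by simp only [Fin.val_mk]; omega)
    obtain ⟨j', hj'1, hj'2⟩ := mem_desSet.mp (hS hkS)
    simp only [hF]
    rw [dif_pos hkn, dif_pos (by omega : k < n)]
    have : j' = ⟨k + 1, hkn⟩ := by ext; simp [hj'1]
    rw [this] at hj'2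
    exact hj'2
  have := nat_chain_gt F (j - 1) hcons a b hab (by omega)
  simp only [hF, dif_pos a.isLt, dif_pos b.isLt] at this
  exact this

lemma FwdA_card (hinj : Function.Injective f) (hjn : j ≤ n) : (FwdA n j f).card = j := by
  rw [FwdA, card_image_of_injective _ hinj, card_filter_val_lt hjn]

lemma FwdAc_card (hinj : Function.Injective f) (hjn : j ≤ n) : ((FwdA n j f)ᶜ).card = n - j := by
  rw [card_compl, FwdA_card hinj hjn]
  simp

lemma FwdA_memf (hinj : Function.Injective f) (p : Fin n) :
    f p ∈ FwdA n j f ↔ (p : ℕ) < j := by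
  simp only [FwdA, mem_image, mem_filter, mem_univ, true_and]
  constructor
  · rintro ⟨i, hi, heq⟩
    rwa [hinj heq] at hi
  · intro hp; exact ⟨p, hp, rfl⟩

lemma FwdG_emb (hinj : Function.Injective f) (hjn : j ≤ n) (i : Fin (n - j)) :
    ((FwdA n j f)ᶜ).orderEmbOfFin (FwdAc_card hinj hjn) (FwdG n j f i) = f (tpos j i) := by
  have hmem : f (tpos j i) ∈ (FwdA n j f)ᶜ := by
    rw [mem_compl, FwdA_memf hinj]
    simp [tpos]
  obtain ⟨i₀, hi₀1, hi₀2⟩ := exists_rnk _ (FwdAc_card hinj hjn) hmem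
  have : FwdG n j f i = i₀ := by
    ext
    simp only [FwdG, ← hi₀2]
    exact Nat.mod_eq_of_lt i₀.isLt
  rw [this, hi₀1]

lemma FwdG_bij (hinj : Function.Injective f) (hjn : j ≤ n) :
    Function.Bijective (FwdG n j f) := by
  rw [Fintype.bijective_iff_injective_and_card]
  refine ⟨?_, rfl⟩
  intro a b hab
  have h1 := FwdG_emb hinj hjn (f := f) a
  have h2 := FwdG_emb hinj hjn (f := f) b
  rw [hab, h2] at h1
  have := hinj h1
  have : (tpos j b : ℕ) = (tpos j a : ℕ) := by rw [this]
  simp only [tpos] at this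
  ext
  omega

lemma FwdS_sub (hinj : Function.Injective f) (hjn : j ≤ n)
    (hS : S ⊆ desSet (wrd f)) :
    FwdS n j S ⊆ desSet (wrd (FwdG n j f)) := by
  intro i hi
  simp only [FwdS, mem_filter, mem_univ, true_and] at hi
  obtain ⟨k, hk1, hk2⟩ := hi
  obtain ⟨k', hk'1, hk'2⟩ := mem_desSet.mp (hS hk2)
  have hk'n := k'.isLt
  have hin : (i : ℕ) + 1 < n - j := by have := i.isLt; omega
  rw [mem_desSet]
  refine ⟨⟨(i : ℕ) + 1, hin⟩, by simp, ?_⟩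
  -- wrd (FwdG) at i+1 < at i
  have e1 := FwdG_emb hinj hjn (f := f) ⟨(i : ℕ) + 1, hin⟩
  have e2 := FwdG_emb hinj hjn (f := f) i
  have hfk : f (tpos j i) = f k := by congr 1; ext; simp only [tpos]; omega
  have hfk' : f (tpos j ⟨(i : ℕ) + 1, hin⟩) = f k' := by
    congr 1; ext; simp only [tpos]; omega
  have hlt : f k' < f k := hk'2
  have : ((FwdA n j f)ᶜ).orderEmbOfFin (FwdAc_card hinj hjn) (FwdG n j f ⟨(i : ℕ) + 1, hin⟩)
      < ((FwdA n j f)ᶜ).orderEmbOfFin (FwdAc_card hinj hjn) (FwdG n j f i) := by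
    rw [e1, e2, hfk, hfk']
    exact hlt
  have h9 : FwdG n j f ⟨(i : ℕ) + 1, hin⟩ < FwdG n j f i :=
    ((FwdA n j f)ᶜ.orderEmbOfFin (FwdAc_card hinj hjn)).lt_iff_lt.mp this
  exact h9

end FwdFacts


section BwdFacts

variable {n j : ℕ} {A : Finset (Fin n)} (hA : A.card = j) (hj1 : 1 ≤ j)
  {g : Fin (n - j) → Fin (n - j)} {T : Finset (Fin (n - j))}

lemma Ac_card (hA : A.card = j) : (Aᶜ).card = n - j := by rw [card_compl, hA]; simp

lemma hjn_of_hA (hA : A.card = j) : j ≤ n := by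
  rw [← hA]; exact (card_le_card (subset_univ A)).trans (by simp)

lemma BwdF_lt (i : Fin n) (a : Fin j) (hi : (i : ℕ) < j) (ha : (a : ℕ) = j - 1 - (i : ℕ)) :
    BwdF A hA hj1 g i = A.orderEmbOfFin hA a := by
  simp only [BwdF]
  rw [dif_pos hi]
  congr 1
  ext
  simp [ha]

lemma BwdF_ge (hAc : (Aᶜ).card = n - j) (i : Fin n) (i' : Fin (n - j))
    (h : (i : ℕ) = j + (i' : ℕ)) :
    BwdF A hA hj1 g i = (Aᶜ).orderEmbOfFin hAc (g i') := by
  simp only [BwdF]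
  rw [dif_neg (by omega)]
  congr 1
  ext
  simp [h]

lemma BwdF_memA (i : Fin n) : BwdF A hA hj1 g i ∈ A ↔ (i : ℕ) < j := by
  by_cases h : (i : ℕ) < j
  · simp only [BwdF, dif_pos h]
    simp only [h, iff_true]
    exact orderEmbOfFin_mem A hA _
  · simp only [BwdF, dif_neg h]
    have := orderEmbOfFin_mem (Aᶜ) (Ac_card hA) (g ⟨(i : ℕ) - j, by have := i.isLt; omega⟩)
    rw [mem_compl] at this
    simp only [h, iff_false]
    exact this

lemma BwdF_bij (hg : Function.Bijective g) : Function.Bijective (BwdF A hA hj1 g) := by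
  rw [Fintype.bijective_iff_injective_and_card]
  refine ⟨?_, rfl⟩
  intro a b hab
  by_cases ha : (a : ℕ) < j <;> by_cases hb : (b : ℕ) < j
  · simp only [BwdF, dif_pos ha, dif_pos hb] at hab
    have h2 := (A.orderEmbOfFin hA).injective hab
    have h3 := congrArg Fin.val h2
    simp only at h3
    ext; omega
  · exfalso
    have h1 := (BwdF_memA hA hj1 (g := g) a).mpr ha
    rw [hab, BwdF_memA] at h1
    omega
  · exfalso
    have h1 := (BwdF_memA hA hj1 (g := g) b).mpr hb
    rw [← hab, BwdF_memA] at h1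
    omega
  · simp only [BwdF, dif_neg ha, dif_neg hb] at hab
    have h1 := hg.injective ((Aᶜ.orderEmbOfFin (Ac_card hA)).injective hab)
    have := congrArg Fin.val h1
    simp only at this
    have hna := a.isLt
    have hnb := b.isLt
    ext; omega

lemma BwdS_sub (hT : T ⊆ desSet (wrd g)) :
    BwdS n j T ⊆ desSet (wrd (BwdF A hA hj1 g)) := by
  have hjn := hjn_of_hA hA
  intro i hi
  simp only [BwdS, mem_filter, mem_univ, true_and] at hi
  rw [mem_desSet]
  rcases hi with h | ⟨hji, i', hi'1, hi'2⟩
  · -- within block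
    have hin : (i : ℕ) + 1 < n := by omega
    refine ⟨⟨(i : ℕ) + 1, hin⟩, by simp, ?_⟩
    have e1 : BwdF A hA hj1 g i = A.orderEmbOfFin hA ⟨j - 1 - (i : ℕ), by omega⟩ :=
      BwdF_lt hA hj1 _ _ (by omega) (by simp)
    have e2 : BwdF A hA hj1 g ⟨(i : ℕ) + 1, hin⟩ =
        A.orderEmbOfFin hA ⟨j - 1 - ((i : ℕ) + 1), by omega⟩ :=
      BwdF_lt hA hj1 _ _ (by simp; omega) (by simp)
    have hlt : A.orderEmbOfFin hA ⟨j - 1 - ((i : ℕ) + 1), by omega⟩ <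
        A.orderEmbOfFin hA ⟨j - 1 - (i : ℕ), by omega⟩ := by
      apply (A.orderEmbOfFin hA).strictMono
      simp only [Fin.lt_def]
      omega
    simp only [wrd]
    rw [e1, e2]
    exact hlt
  · -- within tail
    obtain ⟨k'', hk''1, hk''2⟩ := mem_desSet.mp (hT hi'2)
    have hk''lt := k''.isLt
    have hi'lt := i'.isLt
    have hin : (i : ℕ) + 1 < n := by omega
    refine ⟨⟨(i : ℕ) + 1, hin⟩, by simp, ?_⟩
    have e1 : BwdF A hA hj1 g i = (Aᶜ).orderEmbOfFin (Ac_card hA) (g i') :=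
      BwdF_ge hA hj1 _ _ i' (by omega)
    have e2 : BwdF A hA hj1 g ⟨(i : ℕ) + 1, hin⟩ = (Aᶜ).orderEmbOfFin (Ac_card hA) (g k'') :=
      BwdF_ge hA hj1 _ _ k'' (by simp; omega)
    have hlt : (Aᶜ).orderEmbOfFin (Ac_card hA) (g k'') <
        (Aᶜ).orderEmbOfFin (Ac_card hA) (g i') := by
      apply (Aᶜ.orderEmbOfFin (Ac_card hA)).strictMono
      exact hk''2
    simp only [wrd]
    rw [e1, e2]
    exact hlt

lemma Bwd_bsize (hj1 : 1 ≤ j) (hjn : j ≤ n) (T : Finset (Fin (n - j))) :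
    bsize (BwdS n j T) = j := by
  have hset : (univ.filter fun i : Fin n => ∀ k, k < i → k ∈ BwdS n j T) =
      (univ.filter fun i : Fin n => (i : ℕ) < j) := by
    ext i
    simp only [mem_filter, mem_univ, true_and]
    constructor
    · intro h
      by_contra hij
      push_neg at hij
      have hk : (⟨j - 1, by omega⟩ : Fin n) ∈ BwdS n j T :=
        h _ (by simp only [Fin.lt_def]; omega)
      simp only [BwdS, mem_filter, mem_univ, true_and] at hk
      rcases hk with h2 | ⟨h2, -⟩ <;> omega
    · intro h k hk
      simp only [Fin.lt_def] at hk
      simp only [BwdS, mem_filter, mem_univ, true_and]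
      left
      omega
  rw [bsize, hset, card_filter_val_lt hjn]

end BwdFacts
section RoundTrips

variable {n j : ℕ}

lemma roundtrip1_f (hj1 : 1 ≤ j) (hjn : j ≤ n) {f : Fin n → Fin n} {S : Finset (Fin n)}
    (hbij : Function.Bijective f) (hS : S ⊆ desSet (wrd f)) (hbs : bsize S = j) :
    BwdF (FwdA n j f) (FwdA_card hbij.injective hjn) hj1 (FwdG n j f) = f := by
  funext i
  by_cases hi : (i : ℕ) < j
  · set φ : Fin j → Fin n := fun a => f ⟨j - 1 - (a : ℕ), by omega⟩ with hφ
    have hφmono : StrictMono φ := by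
      intro a b hab
      have hab' : (a : ℕ) < (b : ℕ) := hab
      have hbj := b.isLt
      apply f_dec hS hbs ⟨j - 1 - (b : ℕ), by omega⟩ ⟨j - 1 - (a : ℕ), by omega⟩
      · simp only [Fin.lt_def]; omega
      · simp only [Fin.val_mk]; omega
    have hφmem : ∀ a, φ a ∈ FwdA n j f := by
      intro a
      have haj := a.isLt
      simp only [hφ, FwdA, mem_image]
      refine ⟨⟨j - 1 - (a : ℕ), by omega⟩, ?_, rfl⟩
      simp only [mem_filter, mem_univ, true_and, Fin.val_mk]
      omega
    have huniq := Finset.orderEmbOfFin_unique (FwdA_card hbij.injective hjn) hφmem hφmono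
    rw [BwdF_lt _ hj1 i ⟨j - 1 - (i : ℕ), by omega⟩ hi (by simp), ← huniq]
    simp only [hφ]
    congr 1
    ext
    simp only [Fin.val_mk]
    omega
  · have hii : (i : ℕ) = j + ((i : ℕ) - j) := by omega
    have hlt : (i : ℕ) - j < n - j := by have := i.isLt; omega
    rw [BwdF_ge _ hj1 (FwdAc_card hbij.injective hjn) i ⟨(i : ℕ) - j, hlt⟩ (by simp only [Fin.val_mk]; omega)]
    rw [FwdG_emb hbij.injective hjn]
    congr 1
    ext
    simp only [tpos, Fin.val_mk]
    omega

lemma roundtrip1_S (hj1 : 1 ≤ j) (hjn : j ≤ n) {f : Fin n → Fin n} {S : Finset (Fin n)}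
    (hS : S ⊆ desSet (wrd f)) (hbs : bsize S = j) :
    BwdS n j (FwdS n j S) = S := by
  ext i
  simp only [BwdS, FwdS, mem_filter, mem_univ, true_and]
  constructor
  · rintro (h | ⟨hji, i', hi'1, k, hk1, hk2⟩)
    · exact S_lower hbs i h
    · have : k = i := by ext; omega
      rwa [← this]
  · intro hiS
    by_cases h : (i : ℕ) + 1 < j
    · exact Or.inl h
    · right
      have hji : j ≤ (i : ℕ) := by
        by_contra hc
        push_neg at hc
        exact S_boundary hS hbs hjn i (by omega) hiS
      have hlt : (i : ℕ) - j < n - j := by have := i.isLt; omega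
      exact ⟨hji, ⟨(i : ℕ) - j, hlt⟩, by simp, i, by simp only [Fin.val_mk]; omega, hiS⟩

lemma roundtrip2_A (hj1 : 1 ≤ j) {A : Finset (Fin n)} (hA : A.card = j)
    (g : Fin (n - j) → Fin (n - j)) :
    FwdA n j (BwdF A hA hj1 g) = A := by
  have hjn := hjn_of_hA hA
  ext v
  simp only [FwdA, mem_image, mem_filter, mem_univ, true_and]
  constructor
  · rintro ⟨i, hi, rfl⟩
    exact (BwdF_memA hA hj1 i).mpr hi
  · intro hv
    obtain ⟨a, ha1, -⟩ := exists_rnk A hA hv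
    have haj := a.isLt
    refine ⟨⟨j - 1 - (a : ℕ), by omega⟩, by simp only [Fin.val_mk]; omega, ?_⟩
    rw [BwdF_lt hA hj1 _ a (by simp only [Fin.val_mk]; omega) (by simp only [Fin.val_mk]; omega)]
    exact ha1

lemma roundtrip2_G (hj1 : 1 ≤ j) {A : Finset (Fin n)} (hA : A.card = j)
    (g : Fin (n - j) → Fin (n - j)) :
    FwdG n j (BwdF A hA hj1 g) = g := by
  funext i
  have hii := i.isLt
  have hF : BwdF A hA hj1 g (tpos j i) = (Aᶜ).orderEmbOfFin (Ac_card hA) (g i) :=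
    BwdF_ge hA hj1 _ (tpos j i) i rfl
  ext
  simp only [FwdG]
  rw [roundtrip2_A hj1 hA g, hF, rnk_orderEmbOfFin]
  exact Nat.mod_eq_of_lt (g i).isLt

lemma roundtrip2_T (hj1 : 1 ≤ j) (hjn : j ≤ n) (T : Finset (Fin (n - j))) :
    FwdS n j (BwdS n j T) = T := by
  ext i'
  have hi' := i'.isLt
  simp only [FwdS, BwdS, mem_filter, mem_univ, true_and]
  constructor
  · rintro ⟨k, hk1, h | ⟨h2, i'', hi''1, hi''2⟩⟩
    · omega
    · have : i'' = i' := by ext; omega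
      rwa [← this]
  · intro hT
    refine ⟨⟨j + (i' : ℕ), by omega⟩, by simp, Or.inr ⟨by simp, i', by simp, hT⟩⟩

end RoundTrips
lemma fiber_card {n j : ℕ} (hj1 : 1 ≤ j) (hjn : j ≤ n) :
    ((Pset n).filter fun x => bsize x.2 = j).card =
      ((Finset.powersetCard j (univ : Finset (Fin n))) ×ˢ Pset (n - j)).card := by
  refine Finset.card_bij'
    (fun x _ => (FwdA n j x.1, ⟨FwdG n j x.1, FwdS n j x.2⟩))
    (fun y hy => ⟨BwdF y.1 (Finset.mem_powersetCard_univ.mp (Finset.mem_product.mp hy).1)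
      hj1 y.2.1, BwdS n j y.2.2⟩) ?_ ?_ ?_ ?_
  · rintro ⟨f, S⟩ hx
    rw [mem_filter, mem_Pset] at hx
    obtain ⟨⟨hbij, hS⟩, hbs⟩ := hx
    rw [Finset.mem_product, Finset.mem_powersetCard_univ, mem_Pset]
    exact ⟨FwdA_card hbij.injective hjn,
      FwdG_bij hbij.injective hjn, FwdS_sub hbij.injective hjn hS⟩
  · rintro ⟨A, g, T⟩ hy
    have hy' := hy
    rw [Finset.mem_product, Finset.mem_powersetCard_univ, mem_Pset] at hy'
    obtain ⟨hA, hg, hT⟩ := hy'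
    rw [mem_filter, mem_Pset]
    refine ⟨⟨BwdF_bij _ hj1 hg, BwdS_sub _ hj1 hT⟩, Bwd_bsize hj1 hjn _⟩
  · rintro ⟨f, S⟩ hx
    have hx' := hx
    rw [mem_filter, mem_Pset] at hx'
    obtain ⟨⟨hbij, hS⟩, hbs⟩ := hx'
    refine Sigma.ext ?_ (heq_of_eq ?_)
    · exact roundtrip1_f hj1 hjn hbij hS hbs
    · exact roundtrip1_S hj1 hjn hS hbs
  · rintro ⟨A, g, T⟩ hy
    have hy' := hy
    rw [Finset.mem_product, Finset.mem_powersetCard_univ, mem_Pset] at hy'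
    obtain ⟨hA, hg, hT⟩ := hy'
    refine Prod.ext ?_ ?_
    · exact roundtrip2_A hj1 hA g
    · refine Sigma.ext ?_ (heq_of_eq ?_)
      · exact roundtrip2_G hj1 hA g
      · exact roundtrip2_T hj1 (hjn_of_hA hA) T

lemma Dn_rec {n : ℕ} (hn : 1 ≤ n) : Dn n = ∑ j ∈ Icc 1 n, n.choose j * Dn (n - j) := by
  rw [Dn_eq_card]
  rw [Finset.card_eq_sum_card_fiberwise (f := fun x => bsize x.2) (t := Icc 1 n) ?_]
  · refine sum_congr rfl fun j hj => ?_
    rw [mem_Icc] at hj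
    rw [fiber_card hj.1 hj.2, card_product, Finset.card_powersetCard, card_univ,
      Fintype.card_fin, ← Dn_eq_card]
  · intro x hx
    rw [mem_coe, mem_Icc]
    constructor
    · have h0 : (⟨0, by omega⟩ : Fin n) ∈
          univ.filter (fun i : Fin n => ∀ k, k < i → k ∈ x.2) := by
        simp only [mem_filter, mem_univ, true_and]
        intro k hk
        exact absurd hk (by simp [Fin.lt_def])
      exact Finset.card_pos.mpr ⟨_, h0⟩
    · exact (card_filter_le _ _).trans (by simp)
/-- `a_n = Σ_{π ∈ 𝒬_{n+1}} 2^{des π}`. -/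
def aseq (n : ℕ) : ℕ := ∑ π ∈ Qset n, 2 ^ des π

def qpos (n j : ℕ) (i : Fin j) : Fin (n + 1) :=
  ⟨(n - j + 1 + (i : ℕ)) % (n + 1), Nat.mod_lt _ (by omega)⟩

def QA (n j : ℕ) (π : Equiv.Perm (Fin (n + 1))) : Finset (Fin n) :=
  univ.filter fun v => (n - j : ℕ) < ((π⁻¹ (Fin.castSucc v)) : ℕ)

def Qg (n j : ℕ) (π : Equiv.Perm (Fin (n + 1))) : Fin j → Fin j :=
  fun i => ⟨rnk (QA n j π) ((π (qpos n j i)) : ℕ) % j,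
    Nat.mod_lt _ (by have := i.isLt; omega)⟩

section QFwd

variable {n j : ℕ} {π : Equiv.Perm (Fin (n + 1))}

lemma qpos_val (hjn : j ≤ n) (i : Fin j) : (qpos n j i : ℕ) = n - j + 1 + (i : ℕ) := by
  have := i.isLt
  exact Nat.mod_eq_of_lt (by omega)

lemma qpos_inj (hjn : j ≤ n) : Function.Injective (qpos n j) := by
  intro a b hab
  have := congrArg Fin.val hab
  rw [qpos_val hjn, qpos_val hjn] at this
  ext; omega

lemma tail_ne_last (hjn : j ≤ n) (hπp : ((π⁻¹ (Fin.last n)) : ℕ) = n - j) (i : Fin j) :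
    π (qpos n j i) ≠ Fin.last n := by
  intro h
  have h2 : qpos n j i = π⁻¹ (Fin.last n) := by
    rw [← h]; simp
  have := congrArg Fin.val h2
  rw [qpos_val hjn, hπp] at this
  omega

lemma tail_val_lt (hjn : j ≤ n) (hπp : ((π⁻¹ (Fin.last n)) : ℕ) = n - j) (i : Fin j) :
    ((π (qpos n j i)) : ℕ) < n :=
  Fin.val_lt_last (tail_ne_last hjn hπp i)

lemma tail_mem_QA (hjn : j ≤ n) (hπp : ((π⁻¹ (Fin.last n)) : ℕ) = n - j) (i : Fin j) :
    (⟨((π (qpos n j i)) : ℕ), tail_val_lt hjn hπp i⟩ : Fin n) ∈ QA n j π := by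
  simp only [QA, mem_filter, mem_univ, true_and]
  have hc : Fin.castSucc (⟨((π (qpos n j i)) : ℕ), tail_val_lt hjn hπp i⟩ : Fin n)
      = π (qpos n j i) := by ext; simp
  rw [hc]
  simp only [Equiv.Perm.coe_inv, Equiv.symm_apply_apply]
  rw [qpos_val hjn]
  omega

lemma QA_card (hjn : j ≤ n) (hπp : ((π⁻¹ (Fin.last n)) : ℕ) = n - j) :
    (QA n j π).card = j := by
  have himg : QA n j π =
      univ.image (fun i : Fin j => (⟨((π (qpos n j i)) : ℕ), tail_val_lt hjn hπp i⟩ : Fin n)) := by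
    ext v
    simp only [mem_image, mem_univ, true_and]
    constructor
    · intro hv
      simp only [QA, mem_filter, mem_univ, true_and] at hv
      set q := π⁻¹ (Fin.castSucc v) with hq
      have hqn := q.isLt
      have hilt : (q : ℕ) - (n - j + 1) < j := by omega
      refine ⟨⟨(q : ℕ) - (n - j + 1), hilt⟩, ?_⟩
      have hqq : qpos n j ⟨(q : ℕ) - (n - j + 1), hilt⟩ = q := by
        ext; rw [qpos_val hjn]; simp only [Fin.val_mk]; omega
      ext
      simp only [hqq, hq, Fin.val_mk]
      simp only [← hq, hqq]; rw [hq, Equiv.Perm.coe_inv, Equiv.apply_symm_apply]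
      simp
    · rintro ⟨i, rfl⟩
      exact tail_mem_QA hjn hπp i
  rw [himg, card_image_of_injective _ ?_, card_univ, Fintype.card_fin]
  intro a b hab
  have := congrArg Fin.val hab
  simp only [Fin.val_mk] at this
  exact qpos_inj hjn (π.injective (Fin.val_injective this))

lemma Qg_emb (hjn : j ≤ n) (hπp : ((π⁻¹ (Fin.last n)) : ℕ) = n - j) (i : Fin j) :
    (((QA n j π).orderEmbOfFin (QA_card hjn hπp) (Qg n j π i)) : ℕ)
      = ((π (qpos n j i)) : ℕ) := by
  obtain ⟨i₀, hi₀1, hi₀2⟩ := exists_rnk _ (QA_card hjn hπp) (tail_mem_QA hjn hπp i)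
  have hq : Qg n j π i = i₀ := by
    ext
    simp only [Qg, Fin.val_mk]
    have : rnk (QA n j π) ((π (qpos n j i)) : ℕ)
        = rnk (QA n j π) ((⟨((π (qpos n j i)) : ℕ), tail_val_lt hjn hπp i⟩ : Fin n) : ℕ) := rfl
    rw [this, ← hi₀2]
    exact Nat.mod_eq_of_lt i₀.isLt
  rw [hq, hi₀1]

lemma Qg_bij (hjn : j ≤ n) (hπp : ((π⁻¹ (Fin.last n)) : ℕ) = n - j) :
    Function.Bijective (Qg n j π) := by
  rw [Fintype.bijective_iff_injective_and_card]
  refine ⟨?_, rfl⟩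
  intro a b hab
  have h1 := Qg_emb hjn hπp (π := π) a
  have h2 := Qg_emb hjn hπp (π := π) b
  rw [hab, h2] at h1
  have h3 : π (qpos n j b) = π (qpos n j a) := Fin.val_injective h1
  exact (qpos_inj hjn (π.injective h3)).symm

end QFwd
section DesSplit

variable {n j : ℕ} {π : Equiv.Perm (Fin (n + 1))}

lemma des_split (hjn : j ≤ n) (hπQ : π ∈ Qset n)
    (hπp : ((π⁻¹ (Fin.last n)) : ℕ) = n - j) :
    des π = (if j = 0 then 0 else 1) + dcount (wrd (Qg n j π)) := by
  have hπQ' : ∀ i : Fin n, i.succ ≤ π⁻¹ (Fin.last n) → π i.castSucc < π i.succ := by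
    have h := hπQ; rw [Qset, mem_filter] at h; exact h.2
  have hQinc : ∀ (k : ℕ) (hk1 : k + 1 ≤ n - j),
      (π ⟨k, by omega⟩ : ℕ) < (π ⟨k + 1, by omega⟩ : ℕ) := by
    intro k hk1
    have hkn : k < n := by omega
    have h2 := hπQ' ⟨k, hkn⟩ ?_
    · have e1 : (⟨k, hkn⟩ : Fin n).castSucc = (⟨k, by omega⟩ : Fin (n + 1)) := by ext; simp
      have e2 : (⟨k, hkn⟩ : Fin n).succ = (⟨k + 1, by omega⟩ : Fin (n + 1)) := by ext; simp
      rw [e1, e2] at h2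
      exact h2
    · rw [Fin.le_def]
      simp only [Fin.val_succ, Fin.val_mk, hπp]
      omega
  have hplast : π ⟨n - j, by omega⟩ = Fin.last n := by
    have h3 : π⁻¹ (Fin.last n) = ⟨n - j, by omega⟩ := by
      ext; simp only [Fin.val_mk]; exact hπp
    rw [← h3]
    exact π.apply_symm_apply _
  have hset : desSet (fun i : Fin (n + 1) => (π i : ℕ)) =
      (if j = 0 then (∅ : Finset (Fin (n + 1))) else {(⟨n - j, by omega⟩ : Fin (n + 1))}) ∪
        (desSet (wrd (Qg n j π))).image (qpos n j) := by
    ext i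
    simp only [mem_union, mem_desSet, mem_image]
    constructor
    · rintro ⟨i', hi'1, hi'2⟩
      have hi'n := i'.isLt
      have hin := i.isLt
      rcases lt_trichotomy ((i : ℕ)) (n - j) with hc | hc | hc
      · exfalso
        have hstep := hQinc (i : ℕ) (by omega)
        have e1 : (⟨(i : ℕ), by omega⟩ : Fin (n + 1)) = i := by ext; rfl
        have e2 : (⟨(i : ℕ) + 1, by omega⟩ : Fin (n + 1)) = i' := by ext; simp [hi'1]
        rw [e1, e2] at hstep
        omega
      · left
        have hj0 : j ≠ 0 := by omega
        rw [if_neg hj0, mem_singleton]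
        ext; simp [hc]
      · right
        have hjpos : 1 ≤ j := by omega
        have hi₀lt : (i : ℕ) - (n - j + 1) < j := by omega
        have hi₁lt : ((i : ℕ) - (n - j + 1)) + 1 < j := by omega
        refine ⟨⟨(i : ℕ) - (n - j + 1), hi₀lt⟩, ?_, ?_⟩
        · refine ⟨⟨((i : ℕ) - (n - j + 1)) + 1, hi₁lt⟩, by simp, ?_⟩
          have e1 := Qg_emb hjn hπp (π := π) ⟨(i : ℕ) - (n - j + 1), hi₀lt⟩
          have e2 := Qg_emb hjn hπp (π := π) ⟨((i : ℕ) - (n - j + 1)) + 1, hi₁lt⟩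
          have hq1 : qpos n j ⟨(i : ℕ) - (n - j + 1), hi₀lt⟩ = i := by
            ext; rw [qpos_val hjn]; simp only [Fin.val_mk]; omega
          have hq2 : qpos n j ⟨((i : ℕ) - (n - j + 1)) + 1, hi₁lt⟩ = i' := by
            ext; rw [qpos_val hjn]; simp only [Fin.val_mk]; omega
          rw [hq1] at e1
          rw [hq2] at e2
          have hlt : ((QA n j π).orderEmbOfFin (QA_card hjn hπp)
                (Qg n j π ⟨((i : ℕ) - (n - j + 1)) + 1, hi₁lt⟩))
              < ((QA n j π).orderEmbOfFin (QA_card hjn hπp)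
                (Qg n j π ⟨(i : ℕ) - (n - j + 1), hi₀lt⟩)) := by
            rw [Fin.lt_def, e1, e2]
            exact hi'2
          exact ((QA n j π).orderEmbOfFin (QA_card hjn hπp)).lt_iff_lt.mp hlt
        · ext; rw [qpos_val hjn]; simp only [Fin.val_mk]; omega
    · rintro (h | ⟨i₀, hi₀mem, rfl⟩)
      · by_cases hj0 : j = 0
        · rw [if_pos hj0] at h; exact absurd h (notMem_empty _)
        · rw [if_neg hj0, mem_singleton] at h
          subst h
          have hjpos : 1 ≤ j := by omega
          refine ⟨⟨n - j + 1, by omega⟩, by simp, ?_⟩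
          have hq0 : qpos n j ⟨0, by omega⟩ = ⟨n - j + 1, by omega⟩ := by
            ext; rw [qpos_val hjn]; simp
          have hv := tail_val_lt hjn hπp (⟨0, by omega⟩ : Fin j)
          rw [hq0] at hv
          rw [hplast]
          simpa using hv
      · obtain ⟨k₀, hk₀1, hk₀2⟩ := hi₀mem
        have hk₀n := k₀.isLt
        have hi₀n := i₀.isLt
        refine ⟨qpos n j k₀, by rw [qpos_val hjn, qpos_val hjn]; omega, ?_⟩
        have e1 := Qg_emb hjn hπp (π := π) i₀
        have e2 := Qg_emb hjn hπp (π := π) k₀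
        have hlt : ((QA n j π).orderEmbOfFin (QA_card hjn hπp) (Qg n j π k₀))
            < ((QA n j π).orderEmbOfFin (QA_card hjn hπp) (Qg n j π i₀)) := by
          apply ((QA n j π).orderEmbOfFin (QA_card hjn hπp)).strictMono
          exact hk₀2
        rw [Fin.lt_def, e1, e2] at hlt
        exact hlt
  rw [des_eq_dcount, dcount, hset, card_union_of_disjoint, card_image_of_injective _ (qpos_inj hjn)]
  · congr 1
    by_cases hj0 : j = 0 <;> simp [hj0]
  · rw [disjoint_left]
    intro a ha hb
    simp only [mem_image] at hb
    obtain ⟨i₀, -, rfl⟩ := hb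
    by_cases hj0 : j = 0
    · rw [if_pos hj0] at ha; exact absurd ha (notMem_empty _)
    · rw [if_neg hj0, mem_singleton] at ha
      have := congrArg Fin.val ha
      rw [qpos_val hjn] at this
      simp only [Fin.val_mk] at this
      omega

end DesSplit
def QB {n j : ℕ} (A : Finset (Fin n)) (hA : A.card = j) (g : Fin j → Fin j) :
    Fin (n + 1) → Fin (n + 1) := fun q =>
  if h : (q : ℕ) < n - j then Fin.castSucc ((Aᶜ).orderEmbOfFin (Ac_card hA) ⟨(q : ℕ), h⟩)
  else if h2 : (q : ℕ) = n - j then Fin.last n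
  else Fin.castSucc (A.orderEmbOfFin hA
    (g ⟨(q : ℕ) - (n - j + 1), by have := q.isLt; have := hjn_of_hA hA; omega⟩))

section QBwd

variable {n j : ℕ} {A : Finset (Fin n)} (hA : A.card = j) {g : Fin j → Fin j}

lemma QB_block (q : Fin (n + 1)) (h : (q : ℕ) < n - j) :
    QB A hA g q = Fin.castSucc ((Aᶜ).orderEmbOfFin (Ac_card hA) ⟨(q : ℕ), h⟩) := by
  simp only [QB, dif_pos h]

lemma QB_plast (q : Fin (n + 1)) (h : (q : ℕ) = n - j) : QB A hA g q = Fin.last n := by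
  simp only [QB, dif_neg (by omega : ¬ (q : ℕ) < n - j), dif_pos h]

lemma QB_tail (q : Fin (n + 1)) (i : Fin j) (h : (q : ℕ) = n - j + 1 + (i : ℕ)) :
    QB A hA g q = Fin.castSucc (A.orderEmbOfFin hA (g i)) := by
  have hjn := hjn_of_hA hA
  have hij := i.isLt
  have h1 : ¬ (q : ℕ) < n - j := by omega
  have h2 : ¬ (q : ℕ) = n - j := by omega
  simp only [QB, dif_neg h1, dif_neg h2]
  have h3 : (⟨(q : ℕ) - (n - j + 1), by have := q.isLt; have := hjn_of_hA hA; omega⟩ : Fin j)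
      = i := by ext; simp only [Fin.val_mk]; omega
  rw [h3]

lemma QB_bij (hg : Function.Bijective g) : Function.Bijective (QB A hA g) := by
  have hjn := hjn_of_hA hA
  rw [Fintype.bijective_iff_injective_and_card]
  refine ⟨?_, rfl⟩
  intro a b hab
  have han := a.isLt
  have hbn := b.isLt
  rcases lt_trichotomy ((a : ℕ)) (n - j) with ha1 | ha1 | ha1 <;>
    rcases lt_trichotomy ((b : ℕ)) (n - j) with hb1 | hb1 | hb1
  · rw [QB_block hA a ha1, QB_block hA b hb1] at hab
    have h3 := (Aᶜ.orderEmbOfFin (Ac_card hA)).injective (Fin.castSucc_injective _ hab)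
    have h4 := congrArg Fin.val h3
    simp only [Fin.val_mk] at h4
    ext; exact h4
  · exfalso
    rw [QB_block hA a ha1, QB_plast hA b hb1] at hab
    exact (Fin.castSucc_lt_last _).ne hab
  · exfalso
    have hib : ((b : ℕ) - (n - j + 1)) < j := by omega
    rw [QB_block hA a ha1, QB_tail hA b ⟨_, hib⟩ (by simp only [Fin.val_mk]; omega)] at hab
    have h3 := Fin.castSucc_injective _ hab
    have h4 := orderEmbOfFin_mem (Aᶜ) (Ac_card hA) ⟨(a : ℕ), ha1⟩
    rw [h3] at h4
    exact (mem_compl.mp h4) (orderEmbOfFin_mem A hA _)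
  · exfalso
    rw [QB_plast hA a ha1, QB_block hA b hb1] at hab
    exact (Fin.castSucc_lt_last _).ne hab.symm
  · ext; omega
  · exfalso
    have hib : ((b : ℕ) - (n - j + 1)) < j := by omega
    rw [QB_plast hA a ha1, QB_tail hA b ⟨_, hib⟩ (by simp only [Fin.val_mk]; omega)] at hab
    exact (Fin.castSucc_lt_last _).ne hab.symm
  · exfalso
    have hia : ((a : ℕ) - (n - j + 1)) < j := by omega
    rw [QB_block hA b hb1, QB_tail hA a ⟨_, hia⟩ (by simp only [Fin.val_mk]; omega)] at hab
    have h3 := Fin.castSucc_injective _ hab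
    have h4 := orderEmbOfFin_mem (Aᶜ) (Ac_card hA) ⟨(b : ℕ), hb1⟩
    rw [← h3] at h4
    exact (mem_compl.mp h4) (orderEmbOfFin_mem A hA _)
  · exfalso
    have hia : ((a : ℕ) - (n - j + 1)) < j := by omega
    rw [QB_plast hA b hb1, QB_tail hA a ⟨_, hia⟩ (by simp only [Fin.val_mk]; omega)] at hab
    exact (Fin.castSucc_lt_last _).ne hab
  · have hia : ((a : ℕ) - (n - j + 1)) < j := by omega
    have hib : ((b : ℕ) - (n - j + 1)) < j := by omega
    rw [QB_tail hA a ⟨_, hia⟩ (by simp only [Fin.val_mk]; omega),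
      QB_tail hA b ⟨_, hib⟩ (by simp only [Fin.val_mk]; omega)] at hab
    have h3 := hg.injective ((A.orderEmbOfFin hA).injective (Fin.castSucc_injective _ hab))
    have h4 := congrArg Fin.val h3
    simp only [Fin.val_mk] at h4
    ext; omega

lemma QBperm_inv_last (hg : Function.Bijective g) :
    (((Equiv.ofBijective _ (QB_bij hA hg))⁻¹ (Fin.last n)) : ℕ) = n - j := by
  have hjn := hjn_of_hA hA
  have h1 : (Equiv.ofBijective _ (QB_bij hA hg))⁻¹ (Fin.last n) =
      (⟨n - j, by omega⟩ : Fin (n + 1)) := by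
    rw [Equiv.Perm.inv_def, Equiv.symm_apply_eq]
    exact (QB_plast hA _ rfl).symm
  rw [h1]

lemma QBperm_mem_Qset (hg : Function.Bijective g) :
    Equiv.ofBijective _ (QB_bij hA hg) ∈ Qset n := by
  have hjn := hjn_of_hA hA
  rw [Qset, mem_filter]
  refine ⟨mem_univ _, ?_⟩
  intro i hi
  rw [Fin.le_def] at hi
  have h2 : ((Equiv.ofBijective _ (QB_bij hA hg))⁻¹ (Fin.last n) : ℕ) = n - j :=
    QBperm_inv_last hA hg
  rw [h2] at hi
  simp only [Fin.val_succ] at hi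
  have hcv : ((i.castSucc : Fin (n + 1)) : ℕ) = (i : ℕ) := by simp
  have hsv : ((i.succ : Fin (n + 1)) : ℕ) = (i : ℕ) + 1 := by simp
  have happ : ∀ q : Fin (n + 1), Equiv.ofBijective _ (QB_bij hA hg) q = QB A hA g q :=
    fun _ => rfl
  rw [happ, happ]
  by_cases hlast : (i : ℕ) + 1 = n - j
  · rw [QB_block hA i.castSucc (by omega), QB_plast hA i.succ (by omega)]
    exact Fin.castSucc_lt_last _
  · have hsucc : (i : ℕ) + 1 < n - j := by omega
    rw [QB_block hA i.castSucc (by omega), QB_block hA i.succ (by omega)]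
    rw [Fin.castSucc_lt_castSucc_iff]
    apply (Aᶜ.orderEmbOfFin (Ac_card hA)).strictMono
    simp only [Fin.mk_lt_mk, hcv, hsv]
    omega

end QBwd
section QRT

variable {n j : ℕ} {A : Finset (Fin n)} {g : Fin j → Fin j} {π : Equiv.Perm (Fin (n + 1))}

lemma QRT2_A (hA : A.card = j) (hg : Function.Bijective g) :
    QA n j (Equiv.ofBijective _ (QB_bij hA hg)) = A := by
  have hjn := hjn_of_hA hA
  ext v
  simp only [QA, mem_filter, mem_univ, true_and]
  constructor
  · intro hlt
    set q := (Equiv.ofBijective _ (QB_bij hA hg))⁻¹ (Fin.castSucc v) with hq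
    have happly : QB A hA g q = Fin.castSucc v :=
      Equiv.apply_symm_apply (Equiv.ofBijective _ (QB_bij hA hg)) _
    have hqn := q.isLt
    have hib : (q : ℕ) - (n - j + 1) < j := by omega
    rw [QB_tail hA q ⟨_, hib⟩ (by simp only [Fin.val_mk]; omega)] at happly
    have h3 := Fin.castSucc_injective _ happly
    rw [← h3]
    exact orderEmbOfFin_mem A hA _
  · intro hv
    obtain ⟨a, ha1, -⟩ := exists_rnk A hA hv
    obtain ⟨i, rfl⟩ := hg.surjective a
    have hil := i.isLt
    have hqn : n - j + 1 + (i : ℕ) < n + 1 := by omega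
    have happly : QB A hA g ⟨n - j + 1 + (i : ℕ), hqn⟩ = Fin.castSucc v := by
      rw [QB_tail hA _ i (by simp only [Fin.val_mk])]
      rw [ha1]
    have h4 : (Equiv.ofBijective _ (QB_bij hA hg))⁻¹ (Fin.castSucc v) =
        ⟨n - j + 1 + (i : ℕ), hqn⟩ := by
      rw [Equiv.Perm.inv_def, Equiv.symm_apply_eq]
      exact happly.symm
    rw [h4]
    simp only [Fin.val_mk]
    omega

lemma QRT2_g (hA : A.card = j) (hg : Function.Bijective g) :
    Qg n j (Equiv.ofBijective _ (QB_bij hA hg)) = g := by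
  have hjn := hjn_of_hA hA
  funext i
  ext
  simp only [Qg, Fin.val_mk]
  rw [QRT2_A hA hg]
  have h1 : (Equiv.ofBijective _ (QB_bij hA hg)) (qpos n j i) =
      Fin.castSucc (A.orderEmbOfFin hA (g i)) := QB_tail hA _ i (qpos_val hjn i)
  rw [h1]
  have h2 : ((Fin.castSucc (A.orderEmbOfFin hA (g i))) : ℕ) =
      ((A.orderEmbOfFin hA (g i)) : ℕ) := by simp
  rw [h2, rnk_orderEmbOfFin]
  exact Nat.mod_eq_of_lt (g i).isLt

lemma Qinc (hπQ : π ∈ Qset n) (hπp : ((π⁻¹ (Fin.last n)) : ℕ) = n - j) :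
    ∀ (k : ℕ) (hk1 : k + 1 ≤ n - j),
      (π ⟨k, by omega⟩ : ℕ) < (π ⟨k + 1, by omega⟩ : ℕ) := by
  have hπQ' : ∀ i : Fin n, i.succ ≤ π⁻¹ (Fin.last n) → π i.castSucc < π i.succ := by
    have h := hπQ; rw [Qset, mem_filter] at h; exact h.2
  intro k hk1
  have hkn : k < n := by omega
  have h2 := hπQ' ⟨k, hkn⟩ ?_
  · have e1 : (⟨k, hkn⟩ : Fin n).castSucc = (⟨k, by omega⟩ : Fin (n + 1)) := by ext; simp
    have e2 : (⟨k, hkn⟩ : Fin n).succ = (⟨k + 1, by omega⟩ : Fin (n + 1)) := by ext; simp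
    rw [e1, e2] at h2
    exact h2
  · rw [Fin.le_def]
    simp only [Fin.val_succ, Fin.val_mk, hπp]
    omega

lemma QRT1 (hjn : j ≤ n) (hπQ : π ∈ Qset n) (hπp : ((π⁻¹ (Fin.last n)) : ℕ) = n - j) :
    Equiv.ofBijective _ (QB_bij (QA_card hjn hπp) (Qg_bij hjn hπp)) = π := by
  have hnl : ∀ (k : ℕ) (hk : k < n - j), π (⟨k, by omega⟩ : Fin (n + 1)) ≠ Fin.last n := by
    intro k hk h
    have h2 : (⟨k, by omega⟩ : Fin (n + 1)) = π⁻¹ (Fin.last n) := by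
      exact (Equiv.eq_symm_apply _).mpr h
    have := congrArg Fin.val h2
    simp only [Fin.val_mk, hπp] at this
    omega
  apply Equiv.ext
  intro q
  have happ : (Equiv.ofBijective _ (QB_bij (QA_card hjn hπp) (Qg_bij hjn hπp))) q =
      QB (QA n j π) (QA_card hjn hπp) (Qg n j π) q := rfl
  rw [happ]
  have hqn := q.isLt
  rcases lt_trichotomy ((q : ℕ)) (n - j) with hc | hc | hc
  · rw [QB_block _ q hc]
    set φ : Fin (n - j) → Fin n := fun k =>
      ⟨((π ⟨(k : ℕ), by have := k.isLt; omega⟩) : ℕ),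
        Fin.val_lt_last (hnl (k : ℕ) k.isLt)⟩ with hφ
    have hφmono : StrictMono φ := by
      intro a b hab
      have hal := a.isLt
      have hbl := b.isLt
      set F : ℕ → ℕ := fun k => if h : k < n + 1 then (π ⟨k, h⟩ : ℕ) else 0 with hF
      have hcons : ∀ k, k + 1 ≤ n - j → F k < F (k + 1) := by
        intro k hk
        have h5 := Qinc hπQ hπp k hk
        simp only [hF]
        rw [dif_pos (by omega : k < n + 1), dif_pos (by omega : k + 1 < n + 1)]
        exact h5
      have h6 := nat_chain_lt F (n - j) hcons (a : ℕ) (b : ℕ) hab (by omega)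
      simp only [hF] at h6
      rw [dif_pos (by omega : (a : ℕ) < n + 1), dif_pos (by omega : (b : ℕ) < n + 1)] at h6
      exact h6
    have hφmem : ∀ k, φ k ∈ (QA n j π)ᶜ := by
      intro k
      have hkl := k.isLt
      rw [mem_compl]
      simp only [QA, mem_filter, mem_univ, true_and, not_lt]
      have hcs : Fin.castSucc (φ k) = π ⟨(k : ℕ), by omega⟩ := by
        ext; simp [hφ]
      rw [hcs, Equiv.Perm.coe_inv, Equiv.symm_apply_apply]
      simp only [Fin.val_mk]
      omega
    have huniq := Finset.orderEmbOfFin_unique (Ac_card (QA_card hjn hπp)) hφmem hφmono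
    have h7 : ((QA n j π)ᶜ).orderEmbOfFin (Ac_card (QA_card hjn hπp)) ⟨(q : ℕ), hc⟩ =
        φ ⟨(q : ℕ), hc⟩ := by rw [← huniq]
    rw [h7]
    ext
    simp only [hφ, Fin.coe_castSucc, Fin.val_mk, Fin.eta]
  · rw [QB_plast _ q hc]
    have h2 : q = π⁻¹ (Fin.last n) := by ext; rw [hπp]; exact hc
    rw [h2, Equiv.Perm.coe_inv, Equiv.apply_symm_apply]
  · have hib : (q : ℕ) - (n - j + 1) < j := by omega
    rw [QB_tail _ q ⟨_, hib⟩ (by simp only [Fin.val_mk]; omega)]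
    have hqq : qpos n j ⟨_, hib⟩ = q := by
      ext; rw [qpos_val hjn]; simp only [Fin.val_mk]; omega
    have h8 := Qg_emb hjn hπp (π := π) ⟨_, hib⟩
    rw [hqq] at h8
    ext
    simp only [Fin.coe_castSucc]
    exact h8

end QRT
lemma mem_Wset {m : ℕ} {f : Fin m → Fin m} : f ∈ Wset m ↔ Function.Bijective f := by
  simp [Wset]

lemma Qfiber_sum {n j : ℕ} (hjn : j ≤ n) :
    ∑ π ∈ (Qset n).filter (fun π => n - ((π⁻¹ (Fin.last n)) : ℕ) = j), 2 ^ des π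
      = n.choose j * ((if j = 0 then 1 else 2) * Dn j) := by
  have hRHS : n.choose j * ((if j = 0 then 1 else 2) * Dn j) =
      ∑ y ∈ (Finset.powersetCard j (univ : Finset (Fin n))) ×ˢ Wset j,
        (if j = 0 then 1 else 2) * 2 ^ dcount (wrd y.2) := by
    rw [Finset.sum_product]
    have hx : ∀ x : Finset (Fin n), (∑ y ∈ Wset j,
        (if j = 0 then 1 else 2) * 2 ^ dcount (wrd ((x, y) : _ × _).2))
        = (if j = 0 then 1 else 2) * Dn j := fun x => by rw [← Finset.mul_sum, Dn]
    rw [Finset.sum_congr rfl fun x _ => hx x, Finset.sum_const, Finset.card_powersetCard,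
      card_univ, Fintype.card_fin, smul_eq_mul]
  rw [hRHS]
  refine Finset.sum_bij' (fun π _ => (QA n j π, Qg n j π))
    (fun y hy => Equiv.ofBijective _
      (QB_bij (Finset.mem_powersetCard_univ.mp (Finset.mem_product.mp hy).1)
        (mem_Wset.mp (Finset.mem_product.mp hy).2))) ?_ ?_ ?_ ?_ ?_
  · intro π hπ
    rw [mem_filter] at hπ
    obtain ⟨hQ, hj⟩ := hπ
    have hπp : ((π⁻¹ (Fin.last n)) : ℕ) = n - j := by
      have := (π⁻¹ (Fin.last n)).isLt
      omega
    rw [Finset.mem_product, Finset.mem_powersetCard_univ, mem_Wset]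
    exact ⟨QA_card hjn hπp, Qg_bij hjn hπp⟩
  · intro y hy
    rw [mem_filter]
    have hA := Finset.mem_powersetCard_univ.mp (Finset.mem_product.mp hy).1
    have hg := mem_Wset.mp (Finset.mem_product.mp hy).2
    refine ⟨QBperm_mem_Qset hA hg, ?_⟩
    rw [QBperm_inv_last hA hg]
    omega
  · intro π hπ
    rw [mem_filter] at hπ
    obtain ⟨hQ, hj⟩ := hπ
    have hπp : ((π⁻¹ (Fin.last n)) : ℕ) = n - j := by
      have := (π⁻¹ (Fin.last n)).isLt
      omega
    exact QRT1 hjn hQ hπp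
  · intro y hy
    have hA := Finset.mem_powersetCard_univ.mp (Finset.mem_product.mp hy).1
    have hg := mem_Wset.mp (Finset.mem_product.mp hy).2
    exact Prod.ext (QRT2_A hA hg) (QRT2_g hA hg)
  · intro π hπ
    rw [mem_filter] at hπ
    obtain ⟨hQ, hj⟩ := hπ
    have hπp : ((π⁻¹ (Fin.last n)) : ℕ) = n - j := by
      have := (π⁻¹ (Fin.last n)).isLt
      omega
    rw [des_split hjn hQ hπp, pow_add]
    congr 1
    by_cases h : j = 0 <;> simp [h]

lemma Dn_zero : Dn 0 = 1 := by decide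

lemma aseq_eq (n : ℕ) :
    aseq n = 1 + 2 * ∑ j ∈ Icc 1 n, n.choose j * Dn j := by
  have h1 : aseq n = ∑ j ∈ Finset.range (n + 1),
      n.choose j * ((if j = 0 then 1 else 2) * Dn j) := by
    rw [aseq]
    rw [← Finset.sum_fiberwise_of_maps_to
      (g := fun π : Equiv.Perm (Fin (n + 1)) => n - ((π⁻¹ (Fin.last n)) : ℕ))
      (t := Finset.range (n + 1)) (fun x _ => by
        rw [Finset.mem_range]
        show n - ((x⁻¹ (Fin.last n)) : ℕ) < n + 1
        omega)
      (f := fun π => 2 ^ des π)]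
    exact Finset.sum_congr rfl fun j hj =>
      Qfiber_sum (by rw [Finset.mem_range] at hj; omega)
  have h2 : Finset.range (n + 1) = insert 0 (Icc 1 n) := by
    ext k
    simp only [Finset.mem_range, Finset.mem_insert, Finset.mem_Icc]
    omega
  rw [h1, h2, Finset.sum_insert (by simp)]
  simp only [Nat.choose_zero_right, if_pos rfl, one_mul, Dn_zero]
  rw [Finset.mul_sum]
  congr 1
  refine Finset.sum_congr rfl fun j hj => ?_
  rw [Finset.mem_Icc] at hj
  rw [if_neg (by omega)]
  ring
def Bsum (n : ℕ) : ℕ := ∑ j ∈ Icc 1 n, n.choose j * Dn j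

lemma sum_Icc_choose_eq (m : ℕ) : ∑ d ∈ Icc 1 m, m.choose d = 2 ^ m - 1 := by
  have h1 : Finset.range (m + 1) = insert 0 (Icc 1 m) := by
    ext k
    simp only [Finset.mem_range, Finset.mem_insert, Finset.mem_Icc]
    omega
  have h2 := Nat.sum_range_choose m
  rw [h1, Finset.sum_insert (by simp)] at h2
  simp only [Nat.choose_zero_right] at h2
  omega

lemma inner_choose_sum {n l : ℕ} (hl : l < n) :
    ∑ k ∈ Icc (l + 1) n, n.choose k * k.choose l = n.choose l * (2 ^ (n - l) - 1) := by
  have h1 : ∀ k ∈ Icc (l + 1) n, n.choose k * k.choose l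
      = n.choose l * (n - l).choose (k - l) := by
    intro k hk
    rw [Finset.mem_Icc] at hk
    exact Nat.choose_mul (by omega)
  rw [Finset.sum_congr rfl h1, ← Finset.mul_sum]
  congr 1
  rw [← sum_Icc_choose_eq (n - l)]
  refine Finset.sum_nbij' (i := fun k => k - l) (j := fun d => d + l) ?_ ?_ ?_ ?_ ?_
  · intro k hk
    rw [Finset.mem_Icc] at hk
    show k - l ∈ Icc 1 (n - l)
    rw [Finset.mem_Icc]; omega
  · intro d hd
    rw [Finset.mem_Icc] at hd
    show d + l ∈ Icc (l + 1) n
    rw [Finset.mem_Icc]; omega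
  · intro k hk
    rw [Finset.mem_Icc] at hk
    show k - l + l = k
    omega
  · intro d hd
    rw [Finset.mem_Icc] at hd
    show d + l - l = d
    omega
  · intro k hk; rfl

lemma Bsum_expand {n : ℕ} (hn : 1 ≤ n) :
    Bsum n = ∑ l ∈ Finset.range n, n.choose l * Dn l * (2 ^ (n - l) - 1) := by
  rw [Bsum]
  have step1 : ∀ k ∈ Icc 1 n, n.choose k * Dn k
      = ∑ l ∈ Finset.range k, n.choose k * k.choose l * Dn l := by
    intro k hk
    rw [Finset.mem_Icc] at hk
    rw [Dn_rec hk.1, Finset.mul_sum]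
    refine Finset.sum_nbij' (i := fun i => k - i) (j := fun l => k - l) ?_ ?_ ?_ ?_ ?_
    · intro i hi
      rw [Finset.mem_Icc] at hi
      show k - i ∈ Finset.range k
      rw [Finset.mem_range]; omega
    · intro l hl
      rw [Finset.mem_range] at hl
      show k - l ∈ Icc 1 k
      rw [Finset.mem_Icc]; omega
    · intro i hi
      rw [Finset.mem_Icc] at hi
      show k - (k - i) = i
      omega
    · intro l hl
      rw [Finset.mem_range] at hl
      show k - (k - l) = l
      omega
    · intro i hi
      rw [Finset.mem_Icc] at hi
      rw [Nat.choose_symm (by omega : i ≤ k)]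
      ring
  rw [Finset.sum_congr rfl step1]
  rw [Finset.sum_comm' (t' := Finset.range n) (s' := fun l => Icc (l + 1) n) ?_]
  · refine Finset.sum_congr rfl fun l hl => ?_
    rw [Finset.mem_range] at hl
    have h3 : ∀ k ∈ Icc (l + 1) n, n.choose k * k.choose l * Dn l
        = (n.choose k * k.choose l) * Dn l := fun k _ => by ring
    rw [Finset.sum_congr rfl h3, ← Finset.sum_mul, inner_choose_sum hl]
    ring
  · intro k l
    rw [Finset.mem_Icc, Finset.mem_range, Finset.mem_Icc, Finset.mem_range]
    omega

lemma Bsum_conv {n : ℕ} (hn : 1 ≤ n) :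
    ∑ j ∈ Icc 1 n, n.choose j * Bsum (n - j)
      = ∑ l ∈ Icc 1 (n - 1), n.choose l * Dn l * (2 ^ (n - l) - 1) := by
  have step1 : ∀ j ∈ Icc 1 n, n.choose j * Bsum (n - j)
      = ∑ i ∈ Icc 1 (n - j), n.choose j * ((n - j).choose i * Dn i) := by
    intro j hj
    rw [Bsum, Finset.mul_sum]
  rw [Finset.sum_congr rfl step1]
  rw [Finset.sum_comm' (t' := Icc 1 (n - 1)) (s' := fun i => Icc 1 (n - i)) ?_]
  · refine Finset.sum_congr rfl fun i hi => ?_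
    rw [Finset.mem_Icc] at hi
    have key : ∀ j ∈ Icc 1 (n - i), n.choose j * ((n - j).choose i * Dn i)
        = n.choose i * (n - i).choose j * Dn i := by
      intro j hj
      rw [Finset.mem_Icc] at hj
      have h4 : n.choose j * (n - j).choose i = n.choose i * (n - i).choose j := by
        have h5 := Nat.choose_mul (n := n) (k := n - i) (s := j) (show j ≤ n - i by omega)
        rw [Nat.choose_symm (show i ≤ n by omega)] at h5
        have h6 : (n - j).choose (n - i - j) = (n - j).choose i := by
          rw [show n - i - j = (n - j) - i by omega]
          exact Nat.choose_symm (by omega)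
        rw [← h6]
        rw [h5]
      rw [← mul_assoc, h4]
    rw [Finset.sum_congr rfl key]
    have h7 : ∀ j ∈ Icc 1 (n - i), n.choose i * (n - i).choose j * Dn i
        = (n - i).choose j * (n.choose i * Dn i) := fun j _ => by ring
    rw [Finset.sum_congr rfl h7, ← Finset.sum_mul, sum_Icc_choose_eq]
    ring
  · intro j i
    rw [Finset.mem_Icc, Finset.mem_Icc, Finset.mem_Icc, Finset.mem_Icc]
    omega

lemma Bsum_rec {n : ℕ} (hn : 1 ≤ n) :
    Bsum n = (2 ^ n - 1) + ∑ j ∈ Icc 1 n, n.choose j * Bsum (n - j) := by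
  rw [Bsum_expand hn, Bsum_conv hn]
  have h1 : Finset.range n = insert 0 (Icc 1 (n - 1)) := by
    ext k
    simp only [Finset.mem_range, Finset.mem_insert, Finset.mem_Icc]
    omega
  rw [h1, Finset.sum_insert (by simp)]
  simp [Dn_zero]

theorem aseq_recurrence (n : ℕ) (hn : 1 ≤ n) :
    aseq n = (∑ j ∈ Finset.Icc 1 n, n.choose j * aseq (n - j)) + 2 ^ n := by
  have hpow : 1 ≤ 2 ^ n := Nat.one_le_two_pow
  have h1 : ∑ j ∈ Finset.Icc 1 n, n.choose j * aseq (n - j)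
      = (∑ j ∈ Icc 1 n, n.choose j) + 2 * ∑ j ∈ Icc 1 n, n.choose j * Bsum (n - j) := by
    have : ∀ j ∈ Icc 1 n, n.choose j * aseq (n - j)
        = n.choose j + 2 * (n.choose j * Bsum (n - j)) := by
      intro j hj
      rw [aseq_eq (n - j), Bsum]
      ring
    rw [Finset.sum_congr rfl this, Finset.sum_add_distrib, ← Finset.mul_sum]
  rw [aseq_eq n, h1, sum_Icc_choose_eq]
  have h2 := Bsum_rec hn
  rw [← Bsum]
  omega
end
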